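/- arXiv:1505.01927 — 8 statements merged into one kernel-verified Lean document; each statement's English description precedes it below -/
import Mathlib

section
/- Fix a vertex v of G with d_v ≥ 1, and for every edge e ∈ δ(v) fix a designated endpoint u(e) of e. Sample an edge e uniformly at random from δ(v), and then sample w uniformly at random from Γ(u(e)). Let Z = d_{u(e)} if w is adjacent to both endpoints of e (so that w together with e forms a triangle), and Z = 0 otherwise. Then E[Z] = t_v / d_v. -/
open Finset SimpleGraph
open scoped Classical ENNReal

/-- Expectation of a real-valued function under a `PMF` on a finite type. -/
noncomputable def pmfExp {α : Type*} [Fintype α] (p : PMF α) (f : α → ℝ) : ℝ :=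
  ∑ x, (p x).toReal * f x

lemma tri_count {V : Type*} [Fintype V] [DecidableEq V] (G : SimpleGraph V)
    [DecidableRel G.Adj] {a b : V} (hab : G.Adj a b) :
    ((G.cliqueFinset 3).filter (fun Δ => ∀ x ∈ s(a,b), x ∈ Δ)).card
      = (univ.filter (fun w => ∀ y ∈ s(a,b), G.Adj y w)).card := by
  symm
  apply Finset.card_bij (fun w _ => ({a, b, w} : Finset V))
  · intro w hw
    simp only [mem_filter, Sym2.mem_iff, forall_eq_or_imp, forall_eq, mem_univ, true_and] at hw
    obtain ⟨haw, hbw⟩ := hw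
    simp only [mem_filter, SimpleGraph.mem_cliqueFinset_iff, Sym2.mem_iff, forall_eq_or_imp,
      forall_eq]
    refine ⟨?_, ?_, ?_⟩
    · constructor
      · intro x hx y hy hxy
        simp only [mem_insert, mem_singleton, coe_insert, Set.mem_insert_iff, mem_coe,
          mem_singleton, Set.mem_singleton_iff] at hx hy
        rcases hx with rfl | rfl | rfl <;> rcases hy with rfl | rfl | rfl <;>
          first | exact absurd rfl hxy | assumption |
            (exact hab.symm) | (exact haw.symm) | (exact hbw.symm)
      · rw [Finset.card_insert_of_notMem, Finset.card_insert_of_notMem, Finset.card_singleton]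
        · simp only [mem_singleton]; exact hbw.ne
        · simp only [mem_insert, mem_singleton]
          push_neg
          exact ⟨hab.ne, haw.ne⟩
    · simp
    · simp
  · intro w1 hw1 w2 hw2 h
    simp only [mem_filter, Sym2.mem_iff, forall_eq_or_imp, forall_eq, mem_univ, true_and] at hw1 hw2
    have : w1 ∈ ({a, b, w2} : Finset V) := by rw [← h]; simp
    simp only [mem_insert, mem_singleton] at this
    rcases this with rfl | rfl | rfl
    · exact absurd rfl hw1.1.ne'
    · exact absurd rfl hw1.2.ne'
    · rfl
  · intro Δ hΔ
    simp only [mem_filter, SimpleGraph.mem_cliqueFinset_iff, Sym2.mem_iff, forall_eq_or_imp,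
      forall_eq] at hΔ
    obtain ⟨⟨hclique, hcard⟩, ha, hb⟩ := hΔ
    have : (Δ \ {a, b}).card = 1 := by
      rw [Finset.card_sdiff_of_subset]
      · rw [hcard]
        rw [Finset.card_insert_of_notMem (by simpa using hab.ne), Finset.card_singleton]
      · intro x hx
        simp only [mem_insert, mem_singleton] at hx
        rcases hx with rfl | rfl <;> assumption
    obtain ⟨w, hw⟩ := Finset.card_eq_one.mp this
    have hwmem : w ∈ Δ \ ({a, b} : Finset V) := hw ▸ Finset.mem_singleton_self w
    simp only [Finset.mem_sdiff, mem_insert, mem_singleton] at hwmem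
    push_neg at hwmem
    obtain ⟨hwΔ, hwa, hwb⟩ := hwmem
    refine ⟨w, ?_, ?_⟩
    · simp only [mem_filter, Sym2.mem_iff, forall_eq_or_imp, forall_eq, mem_univ, true_and]
      exact ⟨hclique ha hwΔ (Ne.symm hwa), hclique hb hwΔ (Ne.symm hwb)⟩
    · apply Finset.eq_of_subset_of_card_le
      · intro x hx
        simp only [mem_insert, mem_singleton] at hx
        rcases hx with rfl | rfl | rfl <;> assumption
      · rw [hcard]
        rw [Finset.card_insert_of_notMem, Finset.card_insert_of_notMem, Finset.card_singleton]
        · simpa using Ne.symm hwb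
        · simp only [mem_insert, mem_singleton]; push_neg
          exact ⟨hab.ne, Ne.symm hwa⟩

lemma deg_pos {V : Type*} [Fintype V] [DecidableEq V] (G : SimpleGraph V)
    [DecidableRel G.Adj] {e : Sym2 V} (he : e ∈ G.edgeSet) {x : V} (hx : x ∈ e) :
    0 < G.degree x := by
  induction e with
  | _ a b =>
    rw [Sym2.mem_iff] at hx
    rw [SimpleGraph.mem_edgeSet] at he
    rw [G.degree_pos_iff_exists_adj]
    rcases hx with rfl | rfl
    · exact ⟨b, he⟩
    · exact ⟨a, he.symm⟩

/-- Fix a vertex `v` with `d_v ≥ 1` and for every edge `e ∈ δ(v)` a designated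
endpoint `u e ∈ e`.  Sample `e` uniformly from `δ(v)` and then `w` uniformly from `Γ(u e)`
(so the joint law `p` of `(e, w)` gives mass `1/(d_v · d_{u e})` to each admissible pair).
Let `Z = d_{u e}` if `w` is adjacent to both endpoints of `e`, and `Z = 0` otherwise.
Then `E[Z] = t_v / d_v`. -/
theorem stmt1 {V : Type*} [Fintype V] [DecidableEq V] (G : SimpleGraph V)
    [DecidableRel G.Adj] (v : V) (hv : 1 ≤ G.degree v)
    (u : Sym2 V → V) (hu : ∀ e ∈ G.incidenceFinset v, u e ∈ e)
    (p : PMF (Sym2 V × V))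
    (hp : ∀ e w, p (e, w) =
      if e ∈ G.incidenceFinset v ∧ w ∈ G.neighborFinset (u e)
      then 1 / ((G.degree v : ℝ≥0∞) * (G.degree (u e) : ℝ≥0∞)) else 0) :
    pmfExp p (fun x => if ∀ y ∈ x.1, G.Adj y x.2 then (G.degree (u x.1) : ℝ) else 0)
      = (∑ e ∈ G.incidenceFinset v,
          (((G.cliqueFinset 3).filter (fun Δ => ∀ x ∈ e, x ∈ Δ)).card : ℝ))
        / (G.degree v : ℝ) := by
  have hdv : (0 : ℝ) < G.degree v := by exact_mod_cast hv
  unfold pmfExp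
  rw [Fintype.sum_prod_type]
  rw [← Finset.sum_subset (Finset.subset_univ (G.incidenceFinset v))
    (fun e _ he => by
      apply Finset.sum_eq_zero
      intro w _
      rw [hp e w, if_neg (fun h => he h.1)]
      simp)]
  rw [Finset.sum_div]
  apply Finset.sum_congr rfl
  intro e he
  have heE : e ∈ G.edgeSet := by
    rw [SimpleGraph.mem_incidenceFinset] at he
    exact he.1
  have hue : u e ∈ e := hu e he
  have hdu : 0 < G.degree (u e) := deg_pos G heE hue
  have hdu' : (0 : ℝ) < G.degree (u e) := by exact_mod_cast hdu
  have hterm : ∀ w, (p (e, w)).toReal *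
      (if ∀ y ∈ e, G.Adj y w then (G.degree (u e) : ℝ) else 0)
      = if ∀ y ∈ e, G.Adj y w then 1 / (G.degree v : ℝ) else 0 := by
    intro w
    by_cases hc : ∀ y ∈ e, G.Adj y w
    · rw [if_pos hc, if_pos hc, hp e w,
        if_pos ⟨he, (G.mem_neighborFinset _ _).2 (hc _ hue)⟩]
      rw [one_div, ENNReal.toReal_inv, ENNReal.toReal_mul]
      simp only [ENNReal.toReal_natCast]
      field_simp
    · rw [if_neg hc, if_neg hc, mul_zero]
  simp only [hterm]
  rw [← Finset.sum_filter, Finset.sum_const, nsmul_eq_mul]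
  induction e with
  | _ a b =>
    have hab : G.Adj a b := G.mem_edgeSet.1 heE
    rw [tri_count G hab]
    rw [mul_one_div]
end

section
/- Let ε ∈ (0,1], suppose G has m ≥ 1 edges and t ≥ 1 triangles. Then the number of vertices v with d_v > 2m/(εt)^{1/3} is at most (εt)^{1/3}, the number of vertices v with t_v > t^{2/3}/(2ε^{1/3}) is at most 12·(εt)^{1/3}, and hence the number of vertices satisfying at least one of these two conditions is at most 13·(εt)^{1/3}. -/
open Finset SimpleGraph
open scoped Classical

/-- The number `t_e` of triangles of `G` containing the edge `e`. -/
noncomputable def tE {V : Type*} [Fintype V] [DecidableEq V] (G : SimpleGraph V)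
    [DecidableRel G.Adj] (e : Sym2 V) : ℕ :=
  ((G.cliqueFinset 3).filter (fun Δ => ∀ x ∈ e, x ∈ Δ)).card

/-- `t_v = Σ_{e ∈ δ(v)} t_e`. -/
noncomputable def tV {V : Type*} [Fintype V] [DecidableEq V] (G : SimpleGraph V)
    [DecidableRel G.Adj] (v : V) : ℕ :=
  ∑ e ∈ G.incidenceFinset v, tE G e

lemma card_mem_edge {V : Type*} [Fintype V] [DecidableEq V] (G : SimpleGraph V)
    [DecidableRel G.Adj] (e : Sym2 V) (he : e ∈ G.edgeFinset) :
    ((univ : Finset V).filter (fun v => v ∈ e)).card = 2 := by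
  induction e with
  | _ a b =>
    have hab : a ≠ b := by
      intro h; exact G.not_isDiag_of_mem_edgeSet (mem_edgeFinset.1 he) (by simp [h])
    have : (univ : Finset V).filter (fun v => v ∈ s(a,b)) = {a, b} := by
      ext x; simp [Sym2.mem_iff]
    rw [this, card_insert_of_notMem (by simp [hab]), card_singleton]

lemma edges_in_tri {V : Type*} [Fintype V] [DecidableEq V] (G : SimpleGraph V)
    [DecidableRel G.Adj] (Δ : Finset V) (hΔ : Δ ∈ G.cliqueFinset 3) :
    (G.edgeFinset.filter (fun e => ∀ x ∈ e, x ∈ Δ)).card ≤ 3 := by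
  have hcard : Δ.card = 3 := ((mem_cliqueFinset_iff).1 hΔ).2
  have hsub : G.edgeFinset.filter (fun e => ∀ x ∈ e, x ∈ Δ) ⊆
      Δ.sym2 \ Δ.image Sym2.diag := by
    intro e he
    simp only [mem_filter, mem_edgeFinset] at he
    rw [mem_sdiff, Finset.mem_sym2_iff]
    refine ⟨he.2, ?_⟩
    intro hmem
    simp only [mem_image] at hmem
    obtain ⟨a, _, rfl⟩ := hmem
    exact G.not_isDiag_of_mem_edgeSet he.1 (Sym2.isDiag_iff_proj_eq |>.2 rfl)
  have h1 : (Δ.image Sym2.diag).card = 3 := by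
    rw [Finset.card_image_of_injective _ Sym2.diag_injective, hcard]
  have h2 : Δ.image Sym2.diag ⊆ Δ.sym2 := by
    intro e he; simp only [mem_image] at he; obtain ⟨a, ha, rfl⟩ := he
    exact Finset.diag_mem_sym2_iff.2 ha
  calc _ ≤ (Δ.sym2 \ Δ.image Sym2.diag).card := card_le_card hsub
    _ = Δ.sym2.card - 3 := by rw [card_sdiff_of_subset h2, h1]
    _ ≤ 3 := by rw [Finset.card_sym2, hcard]; decide

lemma sum_tE_le {V : Type*} [Fintype V] [DecidableEq V] (G : SimpleGraph V)
    [DecidableRel G.Adj] :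
    ∑ e ∈ G.edgeFinset, tE G e ≤ 3 * (G.cliqueFinset 3).card := by
  have : ∑ e ∈ G.edgeFinset, tE G e
      = ∑ Δ ∈ G.cliqueFinset 3, (G.edgeFinset.filter (fun e => ∀ x ∈ e, x ∈ Δ)).card := by
    simp only [tE, card_filter]
    rw [Finset.sum_comm]
  rw [this]
  calc _ ≤ ∑ _Δ ∈ G.cliqueFinset 3, 3 :=
        Finset.sum_le_sum (fun Δ hΔ => edges_in_tri G Δ hΔ)
    _ = 3 * (G.cliqueFinset 3).card := by rw [Finset.sum_const, smul_eq_mul, mul_comm]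

lemma sum_tV_le {V : Type*} [Fintype V] [DecidableEq V] (G : SimpleGraph V)
    [DecidableRel G.Adj] :
    ∑ v, tV G v ≤ 6 * (G.cliqueFinset 3).card := by
  have h1 : ∑ v, tV G v = ∑ e ∈ G.edgeFinset, 2 * tE G e := by
    simp only [tV, incidenceFinset_eq_filter, Finset.sum_filter]
    rw [Finset.sum_comm]
    refine Finset.sum_congr rfl (fun e he => ?_)
    rw [← Finset.sum_filter, Finset.sum_const, smul_eq_mul, card_mem_edge G e he]
  rw [h1, ← Finset.mul_sum]
  calc 2 * ∑ e ∈ G.edgeFinset, tE G e ≤ 2 * (3 * (G.cliqueFinset 3).card) := by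
        exact Nat.mul_le_mul_left 2 (sum_tE_le G)
    _ = 6 * (G.cliqueFinset 3).card := by ring

lemma markov {V : Type*} [Fintype V] (f : V → ℕ) (T : ℝ) (hT : 0 < T) :
    (((univ : Finset V).filter (fun v => T < (f v : ℝ))).card : ℝ)
      ≤ (∑ v, (f v : ℝ)) / T := by
  rw [le_div_iff₀ hT]
  set S := (univ : Finset V).filter (fun v => T < (f v : ℝ)) with hS
  calc (S.card : ℝ) * T = ∑ _v ∈ S, T := by rw [Finset.sum_const, nsmul_eq_mul]
    _ ≤ ∑ v ∈ S, (f v : ℝ) := Finset.sum_le_sum (fun v hv =>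
        (le_of_lt (by exact (mem_filter.1 hv).2)))
    _ ≤ ∑ v, (f v : ℝ) := Finset.sum_le_sum_of_subset_of_nonneg (subset_univ S)
        (fun v _ _ => by positivity)


/-- For `ε ∈ (0,1]`, `m ≥ 1` edges and `t ≥ 1` triangles: the number of
vertices with `d_v > 2m/(εt)^{1/3}` is at most `(εt)^{1/3}`, the number of vertices with
`t_v > t^{2/3}/(2ε^{1/3})` is at most `12·(εt)^{1/3}`, and the number of vertices
satisfying at least one of the two conditions is at most `13·(εt)^{1/3}`. -/
theorem stmt4 {V : Type*} [Fintype V] [DecidableEq V] (G : SimpleGraph V)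
    [DecidableRel G.Adj] (ε : ℝ) (hε : 0 < ε) (hε1 : ε ≤ 1)
    (hm : 1 ≤ G.edgeFinset.card) (ht : 1 ≤ (G.cliqueFinset 3).card) :
    (((univ : Finset V).filter (fun v =>
        2 * (G.edgeFinset.card : ℝ) / (ε * (G.cliqueFinset 3).card) ^ ((1 : ℝ) / 3)
          < (G.degree v : ℝ))).card : ℝ)
      ≤ (ε * (G.cliqueFinset 3).card) ^ ((1 : ℝ) / 3) ∧
    (((univ : Finset V).filter (fun v =>
        ((G.cliqueFinset 3).card : ℝ) ^ ((2 : ℝ) / 3) / (2 * ε ^ ((1 : ℝ) / 3))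
          < (tV G v : ℝ))).card : ℝ)
      ≤ 12 * (ε * (G.cliqueFinset 3).card) ^ ((1 : ℝ) / 3) ∧
    (((univ : Finset V).filter (fun v =>
        2 * (G.edgeFinset.card : ℝ) / (ε * (G.cliqueFinset 3).card) ^ ((1 : ℝ) / 3)
          < (G.degree v : ℝ) ∨
        ((G.cliqueFinset 3).card : ℝ) ^ ((2 : ℝ) / 3) / (2 * ε ^ ((1 : ℝ) / 3))
          < (tV G v : ℝ))).card : ℝ)
      ≤ 13 * (ε * (G.cliqueFinset 3).card) ^ ((1 : ℝ) / 3) := by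
  set m : ℝ := (G.edgeFinset.card : ℝ) with hmdef
  set t : ℝ := ((G.cliqueFinset 3).card : ℝ) with htdef
  have hm1 : (1 : ℝ) ≤ m := Nat.one_le_cast.2 hm
  have ht1 : (1 : ℝ) ≤ t := Nat.one_le_cast.2 ht
  have hm0 : (0 : ℝ) < m := by linarith
  have ht0 : (0 : ℝ) < t := by linarith
  have hX : (0 : ℝ) < (ε * t) ^ ((1:ℝ)/3) := Real.rpow_pos_of_pos (by positivity) _
  have hX' : (ε * t) ^ ((1:ℝ)/3) = ε ^ ((1:ℝ)/3) * t ^ ((1:ℝ)/3) :=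
    Real.mul_rpow hε.le ht0.le
  have hεp : (0 : ℝ) < ε ^ ((1:ℝ)/3) := Real.rpow_pos_of_pos hε _
  have htp23 : (0 : ℝ) < t ^ ((2:ℝ)/3) := Real.rpow_pos_of_pos ht0 _
  have htp13 : (0 : ℝ) < t ^ ((1:ℝ)/3) := Real.rpow_pos_of_pos ht0 _
  have htsplit : t = t ^ ((2:ℝ)/3) * t ^ ((1:ℝ)/3) := by
    rw [← Real.rpow_add ht0]
    norm_num
  -- Part 1
  have h1 : (((univ : Finset V).filter (fun v =>
      2 * m / (ε * t) ^ ((1:ℝ)/3) < (G.degree v : ℝ))).card : ℝ)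
      ≤ (ε * t) ^ ((1:ℝ)/3) := by
    have hsum : ∑ v, ((G.degree v : ℝ)) = 2 * m := by
      rw [hmdef]
      exact_mod_cast G.sum_degrees_eq_twice_card_edges
    have hT : (0:ℝ) < 2 * m / (ε * t) ^ ((1:ℝ)/3) := div_pos (by linarith) hX
    calc _ ≤ (∑ v, ((G.degree v : ℝ))) / (2 * m / (ε * t) ^ ((1:ℝ)/3)) :=
          markov (fun v => G.degree v) _ hT
      _ = (ε * t) ^ ((1:ℝ)/3) := by rw [hsum]; field_simp
  -- Part 2
  have h2 : (((univ : Finset V).filter (fun v =>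
      t ^ ((2:ℝ)/3) / (2 * ε ^ ((1:ℝ)/3)) < (tV G v : ℝ))).card : ℝ)
      ≤ 12 * (ε * t) ^ ((1:ℝ)/3) := by
    have hsum : ∑ v, ((tV G v : ℝ)) ≤ 6 * t := by
      rw [htdef]
      exact_mod_cast (by push_cast; exact_mod_cast sum_tV_le G : (∑ v, (tV G v : ℝ)) ≤
        ((6 * (G.cliqueFinset 3).card : ℕ) : ℝ))
    have hT : (0:ℝ) < t ^ ((2:ℝ)/3) / (2 * ε ^ ((1:ℝ)/3)) := div_pos htp23 (mul_pos two_pos hεp)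
    calc _ ≤ (∑ v, ((tV G v : ℝ))) / (t ^ ((2:ℝ)/3) / (2 * ε ^ ((1:ℝ)/3))) :=
          markov (fun v => tV G v) _ hT
      _ ≤ (6 * t) / (t ^ ((2:ℝ)/3) / (2 * ε ^ ((1:ℝ)/3))) :=
          div_le_div_of_nonneg_right hsum hT.le
      _ = 12 * (ε * t) ^ ((1:ℝ)/3) := by
          have hq : t / t ^ ((2:ℝ)/3) = t ^ ((1:ℝ)/3) := by
            rw [show (1:ℝ)/3 = 1 - 2/3 by norm_num, Real.rpow_sub ht0, Real.rpow_one]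
          rw [hX', div_div_eq_mul_div, ← hq]
          field_simp
          ring
  refine ⟨h1, h2, ?_⟩
  have hsub : ((univ : Finset V).filter (fun v =>
      2 * m / (ε * t) ^ ((1:ℝ)/3) < (G.degree v : ℝ) ∨
      t ^ ((2:ℝ)/3) / (2 * ε ^ ((1:ℝ)/3)) < (tV G v : ℝ))).card ≤
      ((univ : Finset V).filter (fun v =>
        2 * m / (ε * t) ^ ((1:ℝ)/3) < (G.degree v : ℝ))).card +
      ((univ : Finset V).filter (fun v =>
        t ^ ((2:ℝ)/3) / (2 * ε ^ ((1:ℝ)/3)) < (tV G v : ℝ))).card := by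
    rw [Finset.filter_or]
    exact Finset.card_union_le _ _
  have := (Nat.cast_le (α := ℝ)).2 hsub
  push_cast at this
  linarith
end

section
/- Suppose G has m ≥ 1 edges, and let v be a vertex of G with d_v ≥ √m. Then (1/d_v) · Σ_{w ∈ Γ(v)} (1 + min(d_v, d_w)/√m) ≤ 5. -/
open Finset SimpleGraph

/-- If `G` has `m ≥ 1` edges and `v` is a vertex with `d_v ≥ √m`, then
`(1/d_v) · Σ_{w ∈ Γ(v)} (1 + min(d_v, d_w)/√m) ≤ 5`. -/
theorem stmt5 {V : Type*} [Fintype V] [DecidableEq V] (G : SimpleGraph V)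
    [DecidableRel G.Adj] (hm : 1 ≤ G.edgeFinset.card)
    (v : V) (hv : Real.sqrt (G.edgeFinset.card) ≤ (G.degree v : ℝ)) :
    (1 / (G.degree v : ℝ)) * ∑ w ∈ G.neighborFinset v,
        (1 + min (G.degree v : ℝ) (G.degree w : ℝ) / Real.sqrt (G.edgeFinset.card))
      ≤ 5 := by
  set m : ℝ := (G.edgeFinset.card : ℝ) with hmdef
  have hm1 : (1 : ℝ) ≤ m := by rw [hmdef]; exact_mod_cast hm
  have hs1 : (1 : ℝ) ≤ Real.sqrt m := by
    rw [show (1:ℝ) = Real.sqrt 1 by simp]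
    exact Real.sqrt_le_sqrt hm1
  have hs0 : (0 : ℝ) < Real.sqrt m := lt_of_lt_of_le one_pos hs1
  have hD : (0 : ℝ) < (G.degree v : ℝ) := lt_of_lt_of_le hs0 hv
  have hsum1 : ∑ w ∈ G.neighborFinset v, ((G.degree w : ℝ))
      ≤ ∑ w : V, ((G.degree w : ℝ)) := by
    apply Finset.sum_le_sum_of_subset_of_nonneg (Finset.subset_univ _)
    intro i _ _; positivity
  have htot : ∑ w : V, ((G.degree w : ℝ)) = 2 * m := by
    rw [hmdef]
    exact_mod_cast congrArg (Nat.cast : ℕ → ℝ)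
      (G.sum_degrees_eq_twice_card_edges)
  have hbound : ∑ w ∈ G.neighborFinset v,
      (1 + min (G.degree v : ℝ) (G.degree w : ℝ) / Real.sqrt m)
      ≤ (G.degree v : ℝ) + 2 * m / Real.sqrt m := by
    have : ∑ w ∈ G.neighborFinset v,
        (1 + min (G.degree v : ℝ) (G.degree w : ℝ) / Real.sqrt m)
        ≤ ∑ w ∈ G.neighborFinset v, (1 + (G.degree w : ℝ) / Real.sqrt m) := by
      apply Finset.sum_le_sum
      intro i _
      gcongr
      exact min_le_right _ _
    refine this.trans ?_
    rw [Finset.sum_add_distrib, Finset.sum_const, G.card_neighborFinset_eq_degree,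
      nsmul_eq_mul, mul_one, ← Finset.sum_div]
    gcongr
    exact htot ▸ hsum1
  have h2ms : 2 * m / Real.sqrt m = 2 * Real.sqrt m := by
    rw [mul_div_assoc, Real.div_sqrt]
  have hfinal : ∑ w ∈ G.neighborFinset v,
      (1 + min (G.degree v : ℝ) (G.degree w : ℝ) / Real.sqrt m)
      ≤ 3 * (G.degree v : ℝ) := by
    calc _ ≤ (G.degree v : ℝ) + 2 * m / Real.sqrt m := hbound
    _ = (G.degree v : ℝ) + 2 * Real.sqrt m := by rw [h2ms]
    _ ≤ (G.degree v : ℝ) + 2 * (G.degree v : ℝ) := by gcongr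
    _ = 3 * (G.degree v : ℝ) := by ring
  calc (1 / (G.degree v : ℝ)) * ∑ w ∈ G.neighborFinset v,
        (1 + min (G.degree v : ℝ) (G.degree w : ℝ) / Real.sqrt m)
      ≤ (1 / (G.degree v : ℝ)) * (3 * (G.degree v : ℝ)) := by
        gcongr
    _ = 3 := by field_simp
    _ ≤ 5 := by norm_num
end

section
/- Σ_{v ∈ L} Σ_{e ∈ δ(v)} wt(T_e) = t − |{triangles Δ of G : all three vertices of Δ lie in H}|. -/
open Finset SimpleGraph
open scoped Classical

/-- The set `T_e` of triangles of `G` containing the edge `e`. -/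
noncomputable def Te {V : Type*} [Fintype V] [DecidableEq V] (G : SimpleGraph V)
    [DecidableRel G.Adj] (e : Sym2 V) : Finset (Finset V) :=
  (G.cliqueFinset 3).filter (fun Δ => ∀ x ∈ e, x ∈ Δ)

/-- The weight of a triangle `Δ`: `0` if `Δ` contains no vertex of the light set `L`,
and `1/(2ℓ)` if it contains exactly `ℓ ≥ 1` vertices of `L`. -/
noncomputable def wtTri {V : Type*} [DecidableEq V] (L : Finset V) (Δ : Finset V) : ℝ :=
  if (Δ ∩ L) = ∅ then 0 else 1 / (2 * ((Δ ∩ L).card : ℝ))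

/-- The weight of a set of triangles: `wt(T) = Σ_{Δ ∈ T} wt(Δ)`. -/
noncomputable def wtSet {V : Type*} [DecidableEq V] (L : Finset V)
    (T : Finset (Finset V)) : ℝ :=
  ∑ Δ ∈ T, wtTri L Δ

lemma count_edges {V : Type*} [Fintype V] [DecidableEq V] (G : SimpleGraph V)
    [DecidableRel G.Adj] {Δ : Finset V} (hΔ : Δ ∈ G.cliqueFinset 3) (v : V) :
    ((G.incidenceFinset v).filter (fun e => ∀ x ∈ e, x ∈ Δ)).card
      = if v ∈ Δ then 2 else 0 := by
  rw [SimpleGraph.mem_cliqueFinset_iff] at hΔ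
  by_cases hv : v ∈ Δ
  · rw [if_pos hv]
    have hcard : (Δ.erase v).card = 2 := by
      rw [Finset.card_erase_of_mem hv, hΔ.card_eq]
    obtain ⟨a, b, hab, hE⟩ := Finset.card_eq_two.1 hcard
    have haΔ : a ∈ Δ := Finset.mem_of_mem_erase (hE ▸ (by simp : a ∈ ({a,b} : Finset V)))
    have hbΔ : b ∈ Δ := Finset.mem_of_mem_erase (hE ▸ (by simp : b ∈ ({a,b} : Finset V)))
    have hav : a ≠ v := Finset.ne_of_mem_erase (hE ▸ (by simp : a ∈ ({a,b} : Finset V)))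
    have hbv : b ≠ v := Finset.ne_of_mem_erase (hE ▸ (by simp : b ∈ ({a,b} : Finset V)))
    have hfe : (G.incidenceFinset v).filter (fun e => ∀ x ∈ e, x ∈ Δ)
        = {s(v,a), s(v,b)} := by
      ext e
      induction e using Sym2.ind with
      | _ x y =>
        simp only [Finset.mem_filter, SimpleGraph.mem_incidenceFinset,
          SimpleGraph.mk'_mem_incidenceSet_iff, Sym2.mem_iff, Finset.mem_insert,
          Finset.mem_singleton, Sym2.eq_iff]
        constructor
        · rintro ⟨⟨hadj, hvxy⟩, hsub⟩
          have hx : x ∈ Δ := hsub x (Or.inl rfl)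
          have hy : y ∈ Δ := hsub y (Or.inr rfl)
          rcases hvxy with rfl | rfl
          · have hmem : y ∈ Δ.erase v := Finset.mem_erase.2 ⟨hadj.ne', hy⟩
            rw [hE] at hmem
            rcases Finset.mem_insert.1 hmem with rfl | h
            · exact Or.inl (Or.inl ⟨rfl, rfl⟩)
            · exact Or.inr (Or.inl ⟨rfl, Finset.mem_singleton.1 h⟩)
          · have hmem : x ∈ Δ.erase v := Finset.mem_erase.2 ⟨hadj.ne, hx⟩
            rw [hE] at hmem
            rcases Finset.mem_insert.1 hmem with rfl | h
            · exact Or.inl (Or.inr ⟨rfl, rfl⟩)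
            · exact Or.inr (Or.inr ⟨Finset.mem_singleton.1 h, rfl⟩)
        · rintro ((⟨rfl, rfl⟩ | ⟨rfl, rfl⟩) | (⟨rfl, rfl⟩ | ⟨rfl, rfl⟩))
          · exact ⟨⟨hΔ.1 hv haΔ (Ne.symm hav), Or.inl rfl⟩,
              by rintro z (rfl | rfl) <;> simp [hv, haΔ]⟩
          · exact ⟨⟨hΔ.1 haΔ hv hav, Or.inr rfl⟩,
              by rintro z (rfl | rfl) <;> simp [hv, haΔ]⟩
          · exact ⟨⟨hΔ.1 hv hbΔ (Ne.symm hbv), Or.inl rfl⟩,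
              by rintro z (rfl | rfl) <;> simp [hv, hbΔ]⟩
          · exact ⟨⟨hΔ.1 hbΔ hv hbv, Or.inr rfl⟩,
              by rintro z (rfl | rfl) <;> simp [hv, hbΔ]⟩
    rw [hfe]
    rw [Finset.card_insert_of_notMem, Finset.card_singleton]
    simp only [Finset.mem_singleton, Sym2.eq_iff]
    rintro (⟨-, rfl⟩ | ⟨rfl, rfl⟩)
    · exact hab rfl
    · exact hav rfl
  · rw [if_neg hv, Finset.card_eq_zero, Finset.filter_eq_empty_iff]
    intro e he hsub
    rw [SimpleGraph.mem_incidenceFinset] at he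
    exact hv (hsub v he.2)

/-- If the vertex set is partitioned into heavy vertices `H` and light
vertices `L`, then `Σ_{v ∈ L} Σ_{e ∈ δ(v)} wt(T_e)` equals `t` minus the number of
triangles all of whose vertices are heavy. -/
theorem stmt6 {V : Type*} [Fintype V] [DecidableEq V] (G : SimpleGraph V)
    [DecidableRel G.Adj] (L H : Finset V) (hHL : ∀ x, x ∈ H ↔ x ∉ L) :
    ∑ v ∈ L, ∑ e ∈ G.incidenceFinset v, wtSet L (Te G e)
      = ((G.cliqueFinset 3).card : ℝ)
        - (((G.cliqueFinset 3).filter (fun Δ => ∀ x ∈ Δ, x ∈ H)).card : ℝ) := by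
  have key : ∀ Δ ∈ G.cliqueFinset 3,
      (∀ x ∈ Δ, x ∈ H) ↔ (Δ ∩ L = ∅) := by
    intro Δ _
    rw [Finset.eq_empty_iff_forall_notMem]
    constructor
    · intro h x hx
      rw [Finset.mem_inter] at hx
      exact (hHL x).1 (h x hx.1) hx.2
    · intro h x hx
      exact (hHL x).2 (fun hxL => h x (Finset.mem_inter.2 ⟨hx, hxL⟩))
  calc ∑ v ∈ L, ∑ e ∈ G.incidenceFinset v, wtSet L (Te G e)
      = ∑ v ∈ L, ∑ e ∈ G.incidenceFinset v, ∑ Δ ∈ G.cliqueFinset 3,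
          if (∀ x ∈ e, x ∈ Δ) then wtTri L Δ else 0 := by
        simp only [wtSet, Te, Finset.sum_filter]
    _ = ∑ Δ ∈ G.cliqueFinset 3, ∑ v ∈ L, ∑ e ∈ G.incidenceFinset v,
          if (∀ x ∈ e, x ∈ Δ) then wtTri L Δ else 0 := by
        rw [Finset.sum_comm]
        congr 1
        ext v
        rw [Finset.sum_comm]
    _ = ∑ Δ ∈ G.cliqueFinset 3, ∑ v ∈ L,
          (if v ∈ Δ then 2 else 0 : ℝ) * wtTri L Δ := by
        apply Finset.sum_congr rfl
        intro Δ hΔ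
        apply Finset.sum_congr rfl
        intro v _
        rw [← Finset.sum_filter, Finset.sum_const, nsmul_eq_mul,
          count_edges G hΔ v]
        split <;> simp
    _ = ∑ Δ ∈ G.cliqueFinset 3, (2 * ((Δ ∩ L).card : ℝ)) * wtTri L Δ := by
        apply Finset.sum_congr rfl
        intro Δ _
        rw [← Finset.sum_mul]
        congr 1
        rw [Finset.sum_ite, Finset.sum_const, Finset.sum_const,
          Finset.filter_mem_eq_inter, Finset.inter_comm]
        simp [mul_comm]
    _ = ∑ Δ ∈ G.cliqueFinset 3, (if Δ ∩ L = ∅ then (0:ℝ) else 1) := by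
        apply Finset.sum_congr rfl
        intro Δ _
        rw [wtTri]
        by_cases h : Δ ∩ L = ∅
        · simp [h]
        · rw [if_neg h, if_neg h]
          have : ((Δ ∩ L).card : ℝ) ≠ 0 := by
            simp [Finset.card_eq_zero, h]
          field_simp
    _ = (((G.cliqueFinset 3).filter (fun Δ => ¬ (Δ ∩ L = ∅))).card : ℝ) := by
        rw [Finset.sum_ite, Finset.sum_const, Finset.sum_const]
        simp
    _ = ((G.cliqueFinset 3).card : ℝ)
        - (((G.cliqueFinset 3).filter (fun Δ => ∀ x ∈ Δ, x ∈ H)).card : ℝ) := by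
        rw [Finset.filter_congr key]
        have := Finset.card_filter_add_card_filter_not
          (s := G.cliqueFinset 3) (p := fun Δ => Δ ∩ L = ∅)
        push_cast [← this]
        ring
end

section
/- Let ε > 0 and suppose G has t ≥ 1 triangles. If |H| ≤ 3·(εt)^{1/3}, then (1 − 9ε)·t ≤ Σ_{v ∈ L} Σ_{e ∈ δ(v)} wt(T_e) ≤ t. -/
open Finset SimpleGraph
open scoped Classical

/-- Let `ε > 0` and suppose `G` has `t ≥ 1` triangles.  If the vertex set is
partitioned into heavy vertices `H` and light vertices `L` with `|H| ≤ 3(εt)^{1/3}`, then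
`(1 − 9ε)·t ≤ Σ_{v ∈ L} Σ_{e ∈ δ(v)} wt(T_e) ≤ t`. -/
theorem stmt7 {V : Type*} [Fintype V] [DecidableEq V] (G : SimpleGraph V)
    [DecidableRel G.Adj] (ε : ℝ) (hε : 0 < ε)
    (ht : 1 ≤ (G.cliqueFinset 3).card)
    (L H : Finset V) (hHL : ∀ x, x ∈ H ↔ x ∉ L)
    (hH : (H.card : ℝ) ≤ 3 * (ε * (G.cliqueFinset 3).card) ^ ((1 : ℝ) / 3)) :
    (1 - 9 * ε) * ((G.cliqueFinset 3).card : ℝ)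
        ≤ ∑ v ∈ L, ∑ e ∈ G.incidenceFinset v, wtSet L (Te G e) ∧
    ∑ v ∈ L, ∑ e ∈ G.incidenceFinset v, wtSet L (Te G e)
        ≤ ((G.cliqueFinset 3).card : ℝ) := by
  classical
  have hcount : ∀ Δ ∈ G.cliqueFinset 3, ∀ v : V,
      ((G.incidenceFinset v).filter (fun e => ∀ x ∈ e, x ∈ Δ)).card
        = if v ∈ Δ then 2 else 0 := by
    intro Δ hΔ v
    rw [G.mem_cliqueFinset_iff, isNClique_iff] at hΔ
    obtain ⟨hclique, hc3⟩ := hΔ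
    by_cases hv : v ∈ Δ
    · rw [if_pos hv]
      have himg : (G.incidenceFinset v).filter (fun e => ∀ x ∈ e, x ∈ Δ)
          = (Δ.erase v).image (fun u => s(v, u)) := by
        ext e
        simp only [Finset.mem_filter, Finset.mem_image, SimpleGraph.mem_incidenceFinset]
        constructor
        · rintro ⟨he, hall⟩
          induction e using Sym2.ind with
          | _ a b =>
            rw [SimpleGraph.mk'_mem_incidenceSet_iff] at he
            obtain ⟨hab, hv'⟩ := he
            rcases hv' with rfl | rfl
            · exact ⟨b, Finset.mem_erase.2 ⟨hab.ne.symm, hall b (Sym2.mem_mk_right _ _)⟩, rfl⟩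
            · exact ⟨a, Finset.mem_erase.2 ⟨hab.ne, hall a (Sym2.mem_mk_left _ _)⟩,
                Sym2.eq_swap⟩
        · rintro ⟨u, hu, rfl⟩
          obtain ⟨hne, huΔ⟩ := Finset.mem_erase.1 hu
          have hadj : G.Adj v u :=
            hclique (Finset.mem_coe.2 hv) (Finset.mem_coe.2 huΔ) (Ne.symm hne)
          refine ⟨?_, ?_⟩
          · rw [SimpleGraph.mk'_mem_incidenceSet_iff]; exact ⟨hadj, Or.inl rfl⟩
          · intro x hx
            rcases Sym2.mem_iff.1 hx with rfl | rfl
            · exact hv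
            · exact huΔ
      rw [himg, Finset.card_image_of_injOn, Finset.card_erase_of_mem hv, hc3]
      intro a ha b hb hab
      exact Sym2.congr_right.1 hab
    · rw [if_neg hv, Finset.card_eq_zero, Finset.filter_eq_empty_iff]
      intro e he
      rw [SimpleGraph.mem_incidenceFinset] at he
      exact fun hall => hv (hall v he.2)
  set t := (G.cliqueFinset 3).card with htdef
  have hmain : ∑ v ∈ L, ∑ e ∈ G.incidenceFinset v, wtSet L (Te G e)
      = ∑ Δ ∈ G.cliqueFinset 3, (if (Δ ∩ L) = ∅ then (0:ℝ) else 1) := by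
    calc ∑ v ∈ L, ∑ e ∈ G.incidenceFinset v, wtSet L (Te G e)
        = ∑ v ∈ L, ∑ e ∈ G.incidenceFinset v, ∑ Δ ∈ G.cliqueFinset 3,
            (if (∀ x ∈ e, x ∈ Δ) then wtTri L Δ else 0) := by
          refine Finset.sum_congr rfl fun v _ => Finset.sum_congr rfl fun e _ => ?_
          rw [wtSet, Te, Finset.sum_filter]
      _ = ∑ v ∈ L, ∑ Δ ∈ G.cliqueFinset 3, ∑ e ∈ G.incidenceFinset v,
            (if (∀ x ∈ e, x ∈ Δ) then wtTri L Δ else 0) :=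
          Finset.sum_congr rfl fun v _ => Finset.sum_comm
      _ = ∑ Δ ∈ G.cliqueFinset 3, ∑ v ∈ L, ∑ e ∈ G.incidenceFinset v,
            (if (∀ x ∈ e, x ∈ Δ) then wtTri L Δ else 0) := Finset.sum_comm
      _ = ∑ Δ ∈ G.cliqueFinset 3, (if (Δ ∩ L) = ∅ then (0:ℝ) else 1) := by
          refine Finset.sum_congr rfl fun Δ hΔ => ?_
          have h1 : ∀ v : V, ∑ e ∈ G.incidenceFinset v,
              (if (∀ x ∈ e, x ∈ Δ) then wtTri L Δ else 0)
              = (if v ∈ Δ then (2:ℝ) else 0) * wtTri L Δ := by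
            intro v
            rw [← Finset.sum_filter, Finset.sum_const, hcount Δ hΔ v]
            by_cases hv : v ∈ Δ <;> simp [hv]
          simp only [h1]
          rw [← Finset.sum_mul]
          have h2 : ∑ v ∈ L, (if v ∈ Δ then (2:ℝ) else 0)
              = 2 * ((Δ ∩ L).card : ℝ) := by
            rw [Finset.sum_ite_mem, Finset.sum_const, Finset.inter_comm]
            ring
          rw [h2, wtTri]
          by_cases hint : (Δ ∩ L) = ∅
          · simp [hint]
          · rw [if_neg hint, if_neg hint]
            have hpos : (0:ℝ) < ((Δ ∩ L).card : ℝ) := by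
              have := Finset.card_pos.2 (Finset.nonempty_iff_ne_empty.2 hint)
              exact_mod_cast this
            field_simp
  rw [hmain]
  have hub : ∑ Δ ∈ G.cliqueFinset 3, (if (Δ ∩ L) = ∅ then (0:ℝ) else 1) ≤ (t : ℝ) := by
    calc ∑ Δ ∈ G.cliqueFinset 3, (if (Δ ∩ L) = ∅ then (0:ℝ) else 1)
        ≤ ∑ _Δ ∈ G.cliqueFinset 3, (1:ℝ) :=
          Finset.sum_le_sum fun Δ _ => by split <;> norm_num
      _ = (t : ℝ) := by rw [Finset.sum_const, nsmul_eq_mul, mul_one]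
  refine ⟨?_, hub⟩
  -- lower bound
  have hsplit : ∑ Δ ∈ G.cliqueFinset 3, (if (Δ ∩ L) = ∅ then (0:ℝ) else 1)
      = (t : ℝ) - ((G.cliqueFinset 3).filter (fun Δ => (Δ ∩ L) = ∅)).card := by
    have : ∀ Δ : Finset V, (if (Δ ∩ L) = ∅ then (0:ℝ) else 1)
        = 1 - (if (Δ ∩ L) = ∅ then 1 else 0) := by intro Δ; split <;> ring
    simp only [this]
    rw [Finset.sum_sub_distrib, Finset.sum_boole, Finset.sum_const, nsmul_eq_mul, mul_one]
  rw [hsplit]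
  have hbadsub : (G.cliqueFinset 3).filter (fun Δ => (Δ ∩ L) = ∅) ⊆ H.powersetCard 3 := by
    intro Δ hΔ
    rw [Finset.mem_filter] at hΔ
    obtain ⟨hΔ3, hint⟩ := hΔ
    rw [G.mem_cliqueFinset_iff, isNClique_iff] at hΔ3
    rw [Finset.mem_powersetCard]
    refine ⟨fun x hx => (hHL x).2 fun hxL => ?_, hΔ3.2⟩
    exact Finset.notMem_empty x (hint ▸ Finset.mem_inter.2 ⟨hx, hxL⟩)
  have hbad : (((G.cliqueFinset 3).filter (fun Δ => (Δ ∩ L) = ∅)).card : ℝ)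
      ≤ (H.card : ℝ) ^ 3 / 6 := by
    calc (((G.cliqueFinset 3).filter (fun Δ => (Δ ∩ L) = ∅)).card : ℝ)
        ≤ ((H.powersetCard 3).card : ℝ) := by
          exact_mod_cast Finset.card_le_card hbadsub
      _ = ((H.card.choose 3 : ℕ) : ℝ) := by rw [Finset.card_powersetCard]
      _ ≤ (H.card : ℝ) ^ 3 / (Nat.factorial 3 : ℝ) := Nat.choose_le_pow_div 3 H.card
      _ = (H.card : ℝ) ^ 3 / 6 := by norm_num [Nat.factorial]
  have ht0 : (0:ℝ) ≤ ε * t := by positivity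
  have hcube : ((ε * t) ^ ((1:ℝ)/3)) ^ (3:ℕ) = ε * t := by
    rw [← Real.rpow_natCast ((ε * t) ^ ((1:ℝ)/3)) 3, ← Real.rpow_mul ht0]
    norm_num
  have hH3 : (H.card : ℝ) ^ 3 ≤ 27 * (ε * t) := by
    have h1 : (H.card : ℝ) ^ 3 ≤ (3 * (ε * t) ^ ((1:ℝ)/3)) ^ 3 :=
      pow_le_pow_left₀ (by positivity) hH 3
    calc (H.card : ℝ) ^ 3 ≤ (3 * (ε * t) ^ ((1:ℝ)/3)) ^ 3 := h1
      _ = 27 * ((ε * t) ^ ((1:ℝ)/3)) ^ (3:ℕ) := by ring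
      _ = 27 * (ε * t) := by rw [hcube]
  have : (((G.cliqueFinset 3).filter (fun Δ => (Δ ∩ L) = ∅)).card : ℝ) ≤ 9 * ε * t := by
    nlinarith [ht0]
  linarith
end

section
/- There exists an absolute constant c > 0 with the following property. Let G have n ≥ 3 vertices and t ≥ 1 triangles, let ε ∈ (0,1), and let w be a function from the vertices of G to the reals with 0 ≤ w(v) ≤ 2·t^{2/3}/ε^{1/3} for every vertex v and (1 − 9ε)·t ≤ Σ_v w(v) ≤ t. Let s be an integer with s ≥ (c·log(n/ε)/ε³) · n/t^{1/3}, and let v_1, …, v_s be i.i.d. uniformly random vertices of G. Then E[(1/s)·Σ_{i=1}^s w(v_i)] lies in [(1 − 9ε)·t/n, t/n], and Pr[(1/s)·Σ_{i=1}^s w(v_i) < (1 − 10ε)·t/n] < ε²/n. -/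
open Finset SimpleGraph MeasureTheory ProbabilityTheory
open scoped ENNReal Classical

private lemma exp_quad_aux (x : ℝ) (hx : x ≤ 0) : Real.exp x ≤ 1 + x + x^2/2 := by
  have hanti : Antitone (fun y : ℝ => 1 + y + y^2/2 - Real.exp y) := by
    apply antitone_of_deriv_nonpos
    · fun_prop
    · intro y
      have : HasDerivAt (fun y : ℝ => 1 + y + y^2/2 - Real.exp y)
          (1 + y - Real.exp y) y := by
        have h1 : HasDerivAt (fun y : ℝ => 1 + y + y^2/2) (1 + y) y := by
          have := ((hasDerivAt_id y).const_add 1).add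
            (((hasDerivAt_pow 2 y)).div_const 2)
          exact this.congr_deriv (by ring)
        exact h1.sub (Real.hasDerivAt_exp y)
      rw [this.deriv]
      have := Real.add_one_le_exp y
      linarith
  have h0 := hanti hx
  simp at h0
  nlinarith [h0]

set_option maxHeartbeats 2000000

/-- There is an absolute constant `c > 0` such that: for every graph `G` with
`n ≥ 3` vertices and `t ≥ 1` triangles, every `ε ∈ (0,1)`, every weight function `w` on
the vertices with `0 ≤ w(v) ≤ 2t^{2/3}/ε^{1/3}` and `(1−9ε)t ≤ Σ_v w(v) ≤ t`, and every
`s ≥ (c·log(n/ε)/ε³)·n/t^{1/3}` i.i.d. uniformly random vertices `v_1, …, v_s`, the mean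
`(1/s)Σ_i w(v_i)` has expectation in `[(1−9ε)t/n, t/n]` and is below `(1−10ε)t/n` with
probability less than `ε²/n`. -/
theorem stmt8 :
    ∃ c : ℝ, 0 < c ∧
      ∀ (V : Type) [Fintype V] [DecidableEq V] (G : SimpleGraph V) [DecidableRel G.Adj]
        (Ω : Type) [MeasureSpace Ω] [IsProbabilityMeasure (ℙ : Measure Ω)]
        (ε : ℝ), 0 < ε → ε < 1 →
        3 ≤ Fintype.card V → 1 ≤ (G.cliqueFinset 3).card →
        ∀ (w : V → ℝ),
        (∀ v, 0 ≤ w v) →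
        (∀ v, w v ≤ 2 * ((G.cliqueFinset 3).card : ℝ) ^ ((2 : ℝ) / 3) / ε ^ ((1 : ℝ) / 3)) →
        (1 - 9 * ε) * ((G.cliqueFinset 3).card : ℝ) ≤ ∑ v, w v →
        (∑ v, w v ≤ ((G.cliqueFinset 3).card : ℝ)) →
        ∀ (s : ℕ),
        (c * Real.log ((Fintype.card V : ℝ) / ε) / ε ^ 3)
            * ((Fintype.card V : ℝ) / ((G.cliqueFinset 3).card : ℝ) ^ ((1 : ℝ) / 3))
          ≤ (s : ℝ) →
        ∀ (X : Fin s → Ω → V),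
        (∀ i (x : V), MeasurableSet (X i ⁻¹' {x})) →
        iIndepFun (m := fun _ => (⊤ : MeasurableSpace V)) X ℙ →
        (∀ i (x : V), ℙ (X i ⁻¹' {x}) = 1 / (Fintype.card V : ℝ≥0∞)) →
        ((∫ ω, (1 / (s : ℝ)) * ∑ i, w (X i ω)) ∈
            Set.Icc ((1 - 9 * ε) * ((G.cliqueFinset 3).card : ℝ) / (Fintype.card V : ℝ))
              (((G.cliqueFinset 3).card : ℝ) / (Fintype.card V : ℝ)) ∧
          ℙ {ω | (1 / (s : ℝ)) * ∑ i, w (X i ω)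
              < (1 - 10 * ε) * ((G.cliqueFinset 3).card : ℝ) / (Fintype.card V : ℝ)}
            < ENNReal.ofReal (ε ^ 2 / (Fintype.card V : ℝ))) := by
  refine ⟨16, by norm_num, ?_⟩
  intro V _ _ G _ Ω _ _ ε hε hε1 hcard htcard w hw0 hwB hwl hwu s hs X hXmeas hXindep hXunif
  letI : MeasurableSpace V := ⊤
  haveI : MeasurableSingletonClass V := ⟨fun _ => MeasurableSpace.measurableSet_top⟩
  set n : ℝ := (Fintype.card V : ℝ) with hn_def
  set t : ℝ := ((G.cliqueFinset 3).card : ℝ) with ht_def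
  have hn3 : (3:ℝ) ≤ n := by rw [hn_def]; exact_mod_cast hcard
  have ht1 : (1:ℝ) ≤ t := by rw [ht_def]; exact_mod_cast htcard
  have hnpos : (0:ℝ) < n := by linarith
  have htpos : (0:ℝ) < t := by linarith
  have hnne : n ≠ 0 := ne_of_gt hnpos
  -- basic quantities
  set L : ℝ := Real.log (n / ε) with hL_def
  have hL1 : 1 ≤ L := by
    have h3 : (3:ℝ) ≤ n / ε := by
      calc (3:ℝ) ≤ n := hn3
      _ ≤ n / ε := by
        rw [le_div_iff₀ hε]; nlinarith
    have : Real.log 3 ≤ L := by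
      apply Real.log_le_log (by norm_num) h3
    have hlog3 : 1 < Real.log 3 := by
      rw [Real.lt_log_iff_exp_lt (by norm_num)]
      have := Real.exp_one_lt_d9
      linarith
    linarith
  have hLpos : 0 < L := by linarith
  set u : ℝ := ε ^ ((1:ℝ)/3) with hu_def
  set T : ℝ := t ^ ((1:ℝ)/3) with hT_def
  set T2 : ℝ := t ^ ((2:ℝ)/3) with hT2_def
  have hupos : 0 < u := Real.rpow_pos_of_pos hε _
  have hTpos : 0 < T := Real.rpow_pos_of_pos htpos _
  have hT2pos : 0 < T2 := Real.rpow_pos_of_pos htpos _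
  have hTT2 : T * T2 = t := by
    rw [hT_def, hT2_def, ← Real.rpow_add htpos]
    norm_num
  have heu : ε ≤ u := by
    rw [hu_def]
    nth_rewrite 1 [show ε = ε ^ (1:ℝ) by rw [Real.rpow_one]]
    exact Real.rpow_le_rpow_of_exponent_ge hε hε1.le (by norm_num)
  set B : ℝ := 2 * T2 / u with hB_def
  have hBpos : 0 < B := by positivity
  set lam : ℝ := ε / B with hlam_def
  have hlampos : 0 < lam := by positivity
  -- s is positive
  have hspos : (0:ℝ) < (s:ℝ) := by
    refine lt_of_lt_of_le ?_ hs
    positivity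
  have hsne : (s:ℝ) ≠ 0 := ne_of_gt hspos
  clear_value L u T T2 B lam
  -- measurability setup
  have hXm : ∀ i, Measurable (X i) := fun i => measurable_to_countable' (hXmeas i)
  have hwm : Measurable w := fun _ _ => MeasurableSpace.measurableSet_top
  have hIPM : ∀ i, IsProbabilityMeasure (Measure.map (X i) ℙ) := fun i =>
    Measure.isProbabilityMeasure_map (hXm i).aemeasurable
  have hInt1 : ∀ i, Integrable (fun ω => w (X i ω)) ℙ := by
    intro i
    haveI := hIPM i
    exact (integrable_map_measure hwm.aestronglyMeasurable (hXm i).aemeasurable).mp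
      Integrable.of_finite
  have hEi : ∀ i, ∫ ω, w (X i ω) = (∑ v, w v) / n := by
    intro i
    haveI := hIPM i
    rw [← integral_map (hXm i).aemeasurable hwm.aestronglyMeasurable,
      integral_fintype Integrable.of_finite]
    have hsing : ∀ v : V, (Measure.map (X i) ℙ) {v} = 1 / (Fintype.card V : ℝ≥0∞) := fun v => by
      rw [Measure.map_apply (hXm i) (measurableSet_singleton v)]; exact hXunif i v
    have htr : ((1 : ℝ≥0∞) / (Fintype.card V : ℝ≥0∞)).toReal = 1 / n := by
      rw [hn_def]; simp
    simp only [measureReal_def, hsing, htr, smul_eq_mul]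
    simp_rw [one_div, inv_mul_eq_div]
    rw [← Finset.sum_div]
  -- Part A
  have hmean : (∫ ω, (1 / (s : ℝ)) * ∑ i, w (X i ω)) = (∑ v, w v) / n := by
    rw [MeasureTheory.integral_const_mul]
    rw [integral_finset_sum univ (fun i _ => hInt1 i)]
    simp only [hEi]
    rw [Finset.sum_const, card_univ, Fintype.card_fin, nsmul_eq_mul]
    field_simp
  have partA : (∫ ω, (1 / (s : ℝ)) * ∑ i, w (X i ω)) ∈
      Set.Icc ((1 - 9 * ε) * t / n) (t / n) := by
    rw [hmean]
    exact ⟨by gcongr, by gcongr⟩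
  refine ⟨partA, ?_⟩
  -- Part B : Chernoff bound
  set Y : Ω → (Fin s → V) := fun ω i => X i ω with hY_def
  have hYm : Measurable Y := measurable_pi_lambda _ hXm
  haveI : IsProbabilityMeasure (Measure.map Y ℙ) := Measure.isProbabilityMeasure_map hYm.aemeasurable
  have hfiber : ∀ x : Fin s → V, (Measure.map Y ℙ) {x} = (1 / (Fintype.card V : ℝ≥0∞)) ^ s := by
    intro x
    rw [Measure.map_apply hYm (measurableSet_singleton x)]
    have hpre : Y ⁻¹' {x} = ⋂ i, X i ⁻¹' {x i} := by
      ext ω; simp [hY_def, funext_iff]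
    rw [hpre, hXindep.meas_iInter (fun i => ⟨{x i}, trivial, rfl⟩)]
    simp [hXunif]
  have htrans : ∀ F : (Fin s → V) → ℝ,
      (∫ ω, F (Y ω)) = ∑ x : Fin s → V, (1 / n) ^ s * F x := by
    intro F
    have hFm : Measurable F := measurable_of_countable F
    rw [← integral_map hYm.aemeasurable hFm.aestronglyMeasurable,
      integral_fintype Integrable.of_finite]
    refine Finset.sum_congr rfl fun x _ => ?_
    rw [measureReal_def, hfiber x, hn_def]
    simp [ENNReal.toReal_pow, smul_eq_mul]
  have hintb : ∀ F : (Fin s → V) → ℝ, Integrable (fun ω => F (Y ω)) ℙ := by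
    intro F
    have hFm : Measurable F := measurable_of_countable F
    exact (integrable_map_measure hFm.aestronglyMeasurable hYm.aemeasurable).mp
      Integrable.of_finite
  -- the bad event
  set a : ℝ := (1 - 10 * ε) * t / n with ha_def
  set A : Set Ω := {ω | (1 / (s : ℝ)) * ∑ i, w (X i ω) < a} with hA_def
  have hApre : A = Y ⁻¹' {x : Fin s → V | (1 / (s : ℝ)) * ∑ i, w (x i) < a} := rfl
  have hAmeas : MeasurableSet A := by
    rw [hApre]
    exact hYm (Set.Finite.measurableSet (Set.toFinite _))
  -- the Chernoff function
  set F0 : (Fin s → V) → ℝ :=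
    fun x => Real.exp (lam * ((s : ℝ) * a - ∑ i, w (x i))) with hF0_def
  -- step 2 : indicator bound
  have hind : (ℙ A).toReal ≤ ∫ ω, F0 (Y ω) := by
    have hι : (ℙ A).toReal = ∫ ω, Set.indicator A (fun _ => (1:ℝ)) ω := by
      rw [integral_indicator_const _ hAmeas]; simp [measureReal_def]
    rw [hι]
    refine integral_mono ((integrable_const (1:ℝ)).indicator hAmeas) (hintb F0) ?_
    intro ω
    by_cases hω : ω ∈ A
    · rw [Set.indicator_of_mem hω]
      have hlt : ∑ i, w (X i ω) < (s : ℝ) * a := by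
        have h' : (1 / (s : ℝ)) * ∑ i, w (X i ω) < a := hω
        rw [one_div, inv_mul_lt_iff₀ hspos] at h'
        exact h'
      have harg : 0 < lam * ((s : ℝ) * a - ∑ i, w (X i ω)) := by
        apply mul_pos hlampos
        linarith
      have : (1:ℝ) = Real.exp 0 := by simp
      rw [this]
      exact (Real.exp_le_exp.mpr harg.le)
    · rw [Set.indicator_of_notMem hω]
      positivity
  -- step 3 : factor the expectation
  set g : V → ℝ := fun v => Real.exp (-(lam * w v)) with hg_def
  have hprod : ∀ x : Fin s → V, F0 x
      = Real.exp (lam * (s : ℝ) * a) * ∏ i, g (x i) := by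
    intro x
    rw [hF0_def]
    simp only [hg_def]
    rw [← Real.exp_sum, ← Real.exp_add]
    congr 1
    have hneg : ∑ i : Fin s, -(lam * w (x i)) = -(lam * ∑ i, w (x i)) := by
      rw [Finset.mul_sum, ← Finset.sum_neg_distrib]
    rw [hneg]
    ring
  have hpisum : ∑ x : Fin s → V, ∏ i, g (x i) = (∑ v, g v) ^ s := by
    calc ∑ x : Fin s → V, ∏ i, g (x i)
        = ∑ x ∈ Fintype.piFinset (fun _ : Fin s => (univ : Finset V)), ∏ i, g (x i) := by
          rw [Fintype.piFinset_univ]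
      _ = ∏ _i : Fin s, ∑ v, g v := (Finset.prod_univ_sum _ _).symm
      _ = (∑ v, g v) ^ s := by rw [Finset.prod_const, card_univ, Fintype.card_fin]
  have hsum : (∫ ω, F0 (Y ω))
      = Real.exp (lam * (s : ℝ) * a) * ((∑ v, g v) / n) ^ s := by
    rw [htrans F0]
    calc ∑ x : Fin s → V, (1 / n) ^ s * F0 x
        = (1 / n) ^ s * Real.exp (lam * (s : ℝ) * a) * ∑ x : Fin s → V, ∏ i, g (x i) := by
          rw [Finset.mul_sum]
          exact Finset.sum_congr rfl fun x _ => by rw [hprod]; ring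
      _ = Real.exp (lam * (s : ℝ) * a) * ((∑ v, g v) / n) ^ s := by
          rw [hpisum, div_pow]
          ring
  -- step 4 : bound on the one-variable factor
  set Sw : ℝ := ∑ v, w v with hSw_def
  set Sq : ℝ := ∑ v, (w v)^2 with hSq_def
  have hq_bound : Sq ≤ B * Sw := by
    rw [hSq_def, hSw_def, Finset.mul_sum]
    refine Finset.sum_le_sum fun v _ => ?_
    have h1 := hw0 v
    have h2 : w v ≤ B := hwB v
    nlinarith
  have hbase : (∑ v, g v) / n ≤ Real.exp (-(lam * (Sw / n)) + lam ^ 2 * (Sq / n) / 2) := by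
    have h1 : ∑ v, g v ≤ ∑ v, (1 + (-(lam * w v)) + (lam * w v) ^ 2 / 2) := by
      refine Finset.sum_le_sum fun v _ => ?_
      have hx : -(lam * w v) ≤ 0 := neg_nonpos.mpr (mul_nonneg hlampos.le (hw0 v))
      have h := exp_quad_aux (-(lam * w v)) hx
      rw [neg_sq] at h
      exact h
    have e1 : ∑ _v : V, (1:ℝ) = n := by
      rw [Finset.sum_const, card_univ, nsmul_eq_mul, mul_one, hn_def]
    have e3 : ∑ v, (-(lam * w v)) = -(lam * Sw) := by
      rw [hSw_def, Finset.mul_sum, ← Finset.sum_neg_distrib]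
    have e4 : ∑ v, (lam * w v) ^ 2 / 2 = lam ^ 2 * Sq / 2 := by
      rw [← Finset.sum_div, hSq_def, Finset.mul_sum]
      congr 1
      exact Finset.sum_congr rfl fun v _ => by ring
    have h2 : ∑ v, (1 + (-(lam * w v)) + (lam * w v) ^ 2 / 2)
        = n + (-(lam * Sw)) + lam ^ 2 * Sq / 2 := by
      rw [Finset.sum_add_distrib, Finset.sum_add_distrib, e1, e3, e4]
    have h3 : (∑ v, g v) / n ≤ 1 + (-(lam * (Sw / n)) + lam ^ 2 * (Sq / n) / 2) := by
      rw [div_le_iff₀ hnpos]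
      calc ∑ v, g v ≤ n + (-(lam * Sw)) + lam ^ 2 * Sq / 2 := h1.trans_eq h2
        _ = (1 + (-(lam * (Sw / n)) + lam ^ 2 * (Sq / n) / 2)) * n := by
            have hSwn : Sw / n * n = Sw := div_mul_cancel₀ _ hnne
            have hSqn : Sq / n * n = Sq := div_mul_cancel₀ _ hnne
            linear_combination (lam) * hSwn + (-(lam ^ 2) / 2) * hSqn
    exact h3.trans (by have := Real.add_one_le_exp (-(lam * (Sw / n)) + lam ^ 2 * (Sq / n) / 2); linarith)
  -- step 5 : numeric exponent bound
  have hDnn : 0 ≤ (∑ v, g v) / n := by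
    apply div_nonneg _ hnpos.le
    exact Finset.sum_nonneg fun v _ => (Real.exp_pos _).le
  have hpow : ((∑ v, g v) / n) ^ s
      ≤ Real.exp ((s : ℝ) * (-(lam * (Sw / n)) + lam ^ 2 * (Sq / n) / 2)) := by
    calc ((∑ v, g v) / n) ^ s
        ≤ (Real.exp (-(lam * (Sw / n)) + lam ^ 2 * (Sq / n) / 2)) ^ s :=
          pow_le_pow_left₀ hDnn hbase s
      _ = Real.exp ((s : ℝ) * (-(lam * (Sw / n)) + lam ^ 2 * (Sq / n) / 2)) := by
          rw [← Real.exp_nat_mul]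
  -- collect : toReal ℙ A ≤ exp (s * (lam * a - lam * Sw/n + lam² Sq/n /2))
  have hcollect : (ℙ A).toReal
      ≤ Real.exp ((s : ℝ) * (lam * a + (-(lam * (Sw / n)) + lam ^ 2 * (Sq / n) / 2))) := by
    refine hind.trans ?_
    rw [hsum]
    calc Real.exp (lam * (s : ℝ) * a) * ((∑ v, g v) / n) ^ s
        ≤ Real.exp (lam * (s : ℝ) * a)
            * Real.exp ((s : ℝ) * (-(lam * (Sw / n)) + lam ^ 2 * (Sq / n) / 2)) := by
          exact mul_le_mul_of_nonneg_left hpow (Real.exp_pos _).le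
      _ = Real.exp ((s : ℝ) * (lam * a + (-(lam * (Sw / n)) + lam ^ 2 * (Sq / n) / 2))) := by
          rw [← Real.exp_add]
          congr 1
          ring
  -- numeric exponent bound
  clear_value n t a Sw Sq A F0 g Y
  have hamu : a - Sw / n ≤ -(ε * t / n) := by
    have h1 : (1 - 9 * ε) * t / n ≤ Sw / n := by gcongr
    have h2 : (1 - 10 * ε) * t / n - (1 - 9 * ε) * t / n = -(ε * t / n) := by ring
    rw [ha_def]
    linarith
  have hq2 : Sq / n ≤ B * t / n := by
    have h0 : Sq ≤ B * t := hq_bound.trans (mul_le_mul_of_nonneg_left hwu hBpos.le)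
    gcongr
  have idA : lam * (ε * t / n) = ε ^ 2 * t / (B * n) := by
    rw [hlam_def]; field_simp
  have idB : lam ^ 2 * (B * t / n) / 2 = ε ^ 2 * t / (2 * B * n) := by
    rw [hlam_def]; field_simp
  have hexp_core : lam * a + (-(lam * (Sw / n)) + lam ^ 2 * (Sq / n) / 2)
      ≤ -(ε ^ 2 * t / (2 * B * n)) := by
    have step1 : lam * a - lam * (Sw / n) ≤ -(ε ^ 2 * t / (B * n)) := by
      calc lam * a - lam * (Sw / n) = lam * (a - Sw / n) := by ring
        _ ≤ lam * (-(ε * t / n)) := mul_le_mul_of_nonneg_left hamu hlampos.le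
        _ = -(ε ^ 2 * t / (B * n)) := by rw [mul_neg, idA]
    have step2 : lam ^ 2 * (Sq / n) / 2 ≤ ε ^ 2 * t / (2 * B * n) := by
      calc lam ^ 2 * (Sq / n) / 2 ≤ lam ^ 2 * (B * t / n) / 2 := by gcongr
        _ = ε ^ 2 * t / (2 * B * n) := idB
    have hcomb : -(ε ^ 2 * t / (B * n)) + ε ^ 2 * t / (2 * B * n)
        = -(ε ^ 2 * t / (2 * B * n)) := by ring
    linarith
  have hkey : 4 * L ≤ (s : ℝ) * (ε ^ 2 * t / (2 * B * n)) := by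
    have hdpos : (0:ℝ) < ε ^ 2 * t / (2 * B * n) := by positivity
    have h1 : (16 * L / ε ^ 3 * (n / T)) * (ε ^ 2 * t / (2 * B * n))
        ≤ (s : ℝ) * (ε ^ 2 * t / (2 * B * n)) :=
      mul_le_mul_of_nonneg_right hs hdpos.le
    have h2 : (16 * L / ε ^ 3 * (n / T)) * (ε ^ 2 * t / (2 * B * n)) = 4 * L * (u / ε) := by
      rw [hB_def, ← hTT2]
      field_simp
      ring
    have h3 : 1 ≤ u / ε := (one_le_div hε).mpr heu
    have h4 : 4 * L ≤ 4 * L * (u / ε) :=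
      le_mul_of_one_le_right (by positivity) h3
    have h5 := h2 ▸ h1
    linarith
  have hexp_total : (s : ℝ) * (lam * a + (-(lam * (Sw / n)) + lam ^ 2 * (Sq / n) / 2))
      ≤ -(4 * L) := by
    have h1 : (s : ℝ) * (lam * a + (-(lam * (Sw / n)) + lam ^ 2 * (Sq / n) / 2))
        ≤ (s : ℝ) * (-(ε ^ 2 * t / (2 * B * n))) :=
      mul_le_mul_of_nonneg_left hexp_core hspos.le
    have h2 : (s : ℝ) * (-(ε ^ 2 * t / (2 * B * n)))
        = -((s : ℝ) * (ε ^ 2 * t / (2 * B * n))) := by ring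
    linarith
  have hfinal1 : (ℙ A).toReal ≤ Real.exp (-(4 * L)) :=
    hcollect.trans (Real.exp_le_exp.mpr hexp_total)
  have hexpL : Real.exp L = n / ε := by
    rw [hL_def]; exact Real.exp_log (by positivity)
  have hval : Real.exp (-(4 * L)) = (ε / n) ^ 4 := by
    rw [Real.exp_neg, show (4:ℝ) * L = ((4:ℕ):ℝ) * L by norm_num, Real.exp_nat_mul, hexpL,
      ← inv_pow, inv_div]
  have hfinal2 : (ε / n) ^ 4 < ε ^ 2 / n := by
    rw [div_pow]
    have h1 : ε ^ 4 ≤ ε ^ 2 := pow_le_pow_of_le_one hε.le hε1.le (by norm_num)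
    have hn1 : (1:ℝ) < n := by linarith
    have h2 : n < n ^ 4 := by
      calc n = n * 1 := by ring
        _ < n * n ^ 3 := mul_lt_mul_of_pos_left (one_lt_pow₀ hn1 (by norm_num)) hnpos
        _ = n ^ 4 := by ring
    calc ε ^ 4 / n ^ 4 ≤ ε ^ 2 / n ^ 4 := by gcongr
      _ < ε ^ 2 / n := div_lt_div_of_pos_left (by positivity) hnpos h2
  refine (ENNReal.lt_ofReal_iff_toReal_lt (measure_ne_top ℙ A)).mpr ?_
  exact lt_of_le_of_lt (hfinal1.trans_eq hval) hfinal2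
end

section
/- Suppose G has m ≥ 1 edges. Let u be a vertex with d_u ≥ 1 and let a : Γ(u) → [0, 1/2] be any function. Define a random variable Y as follows. If d_u ≤ √m: with probability d_u/√m sample w uniformly at random from Γ(u) and set Y = √m · a(w), and otherwise set Y = 0. If d_u > √m: let R = ⌈d_u/√m⌉, sample w_1, …, w_R i.i.d. uniformly at random from Γ(u), and set Y = (1/R)·Σ_{j=1}^R d_u · a(w_j). In both cases, E[Y] = Σ_{w ∈ Γ(u)} a(w) and Var(Y) ≤ √m · E[Y]. -/
open Finset SimpleGraph
open scoped Classical ENNReal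

/-- Variance of a real-valued function under a `PMF` on a finite type. -/
noncomputable def pmfVar {α : Type*} [Fintype α] (p : PMF α) (f : α → ℝ) : ℝ :=
  ∑ x, (p x).toReal * (f x - pmfExp p f) ^ 2


lemma pmf_sum_toReal_one {α : Type*} [Fintype α] (p : PMF α) :
    ∑ x, (p x).toReal = 1 := by
  have h : ∑ x, p x = 1 := by
    exact (tsum_fintype (fun x => p x)).symm.trans p.tsum_coe
  rw [← ENNReal.toReal_sum (fun a _ => PMF.apply_ne_top p a), h, ENNReal.toReal_one]

lemma pmfVar_eq {α : Type*} [Fintype α] (p : PMF α) (f : α → ℝ) :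
    pmfVar p f = pmfExp p (fun x => f x ^ 2) - (pmfExp p f) ^ 2 := by
  unfold pmfVar pmfExp
  have h1 := pmf_sum_toReal_one p
  set E := ∑ x, (p x).toReal * f x with hE
  have key : ∀ x : α, (p x).toReal * (f x - E) ^ 2
      = (p x).toReal * f x ^ 2 - 2 * E * ((p x).toReal * f x) + E ^ 2 * (p x).toReal := by
    intro x; ring
  rw [Finset.sum_congr rfl fun x _ => key x]
  rw [Finset.sum_add_distrib, Finset.sum_sub_distrib, ← Finset.mul_sum, ← Finset.mul_sum,
    h1, ← hE]
  ring

lemma prod_ite_const {ι : Type*} [Fintype ι] [DecidableEq ι] (j : ι) (B D : ℝ) :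
    (∏ i : ι, if i = j then B else D) = B * D ^ (Fintype.card ι - 1) := by
  rw [← Finset.mul_prod_erase Finset.univ _ (Finset.mem_univ j)]
  rw [if_pos rfl]
  congr 1
  rw [Finset.prod_congr rfl (fun i hi => if_neg (Finset.mem_erase.mp hi).1),
    Finset.prod_const, Finset.card_erase_of_mem (Finset.mem_univ j), Finset.card_univ]

lemma sum_pi_one {V : Type*} [DecidableEq V] (R : ℕ) (N : Finset V) (b : V → ℝ) (j : Fin R) :
    ∑ f ∈ Fintype.piFinset (fun _ : Fin R => N), b (f j)
      = (N.card : ℝ) ^ (R - 1) * ∑ w ∈ N, b w := by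
  have h := Finset.prod_univ_sum (fun _ : Fin R => N)
    (fun (i : Fin R) (x : V) => if i = j then b x else 1)
  simp only [Finset.prod_ite_eq', Finset.mem_univ, if_true] at h
  rw [← h, Finset.prod_congr rfl (fun i _ => show (∑ x ∈ N, if i = j then b x else 1)
      = if i = j then ∑ x ∈ N, b x else (N.card : ℝ) by split <;> simp),
    prod_ite_const, Fintype.card_fin]
  ring

lemma prod_ite_two {ι : Type*} [Fintype ι] [DecidableEq ι] (j k : ι) (hjk : j ≠ k) (B C D : ℝ) :
    (∏ i : ι, if i = j then B else if i = k then C else D)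
      = B * C * D ^ (Fintype.card ι - 2) := by
  rw [← Finset.mul_prod_erase Finset.univ _ (Finset.mem_univ j), if_pos rfl,
    ← Finset.mul_prod_erase _ _ (Finset.mem_erase.mpr ⟨Ne.symm hjk, Finset.mem_univ k⟩),
    if_neg (Ne.symm hjk), if_pos rfl]
  rw [Finset.prod_congr rfl (fun i hi => ?_), Finset.prod_const, Finset.card_erase_of_mem
    (Finset.mem_erase.mpr ⟨Ne.symm hjk, Finset.mem_univ k⟩),
    Finset.card_erase_of_mem (Finset.mem_univ j), Finset.card_univ, mul_assoc]
  · rfl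
  · obtain ⟨hik, hi⟩ := Finset.mem_erase.mp hi
    rw [if_neg (Finset.mem_erase.mp hi).1, if_neg hik]

lemma sum_pi_two {V : Type*} [DecidableEq V] (R : ℕ) (N : Finset V) (b c : V → ℝ)
    (j k : Fin R) (hjk : j ≠ k) :
    ∑ f ∈ Fintype.piFinset (fun _ : Fin R => N), b (f j) * c (f k)
      = (N.card : ℝ) ^ (R - 2) * ((∑ w ∈ N, b w) * ∑ w ∈ N, c w) := by
  have h := Finset.prod_univ_sum (fun _ : Fin R => N)
    (fun (i : Fin R) (x : V) => if i = j then b x else if i = k then c x else 1)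
  have hfk : ∀ f : Fin R → V,
      (∏ i, if i = j then b (f i) else if i = k then c (f i) else 1)
        = b (f j) * c (f k) := by
    intro f
    rw [← Finset.mul_prod_erase Finset.univ _ (Finset.mem_univ j), if_pos rfl,
      ← Finset.mul_prod_erase _ _ (Finset.mem_erase.mpr ⟨Ne.symm hjk, Finset.mem_univ k⟩),
      if_neg (Ne.symm hjk), if_pos rfl,
      Finset.prod_eq_one (fun i hi => ?_), mul_one]
    obtain ⟨hik, hi⟩ := Finset.mem_erase.mp hi
    rw [if_neg (Finset.mem_erase.mp hi).1, if_neg hik]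
  rw [Finset.sum_congr rfl (fun f _ => hfk f)] at h
  rw [← h, Finset.prod_congr rfl (fun i _ =>
    show (∑ x ∈ N, if i = j then b x else if i = k then c x else 1)
      = if i = j then ∑ x ∈ N, b x else if i = k then ∑ x ∈ N, c x else (N.card : ℝ) by
      split
      · rfl
      · split <;> simp),
    prod_ite_two _ _ hjk, Fintype.card_fin]
  ring


lemma stmt10_part1 {V : Type*} [Fintype V] [DecidableEq V] (G : SimpleGraph V)
    [DecidableRel G.Adj] (hm : 1 ≤ G.edgeFinset.card)
    (u : V) (hu : 1 ≤ G.degree u)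
    (a : V → ℝ) (ha : ∀ w ∈ G.neighborFinset u, a w ∈ Set.Icc (0 : ℝ) (1 / 2)) :
    ((G.degree u : ℝ) ≤ Real.sqrt (G.edgeFinset.card) →
      ∀ p : PMF (Option V),
        (∀ w : V, p (some w) =
          if w ∈ G.neighborFinset u
          then ENNReal.ofReal (1 / Real.sqrt (G.edgeFinset.card)) else 0) →
        p none = ENNReal.ofReal
          (1 - (G.degree u : ℝ) / Real.sqrt (G.edgeFinset.card)) →
        (pmfExp p (fun o => o.elim 0 (fun w => Real.sqrt (G.edgeFinset.card) * a w))
            = ∑ w ∈ G.neighborFinset u, a w ∧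
          pmfVar p (fun o => o.elim 0 (fun w => Real.sqrt (G.edgeFinset.card) * a w))
            ≤ Real.sqrt (G.edgeFinset.card) *
              pmfExp p (fun o => o.elim 0 (fun w => Real.sqrt (G.edgeFinset.card) * a w)))) := by
  set s := Real.sqrt (G.edgeFinset.card) with hs_def
  set N := G.neighborFinset u with hN_def
  have hs : 0 < s := Real.sqrt_pos.mpr (by exact_mod_cast Nat.lt_of_lt_of_le Nat.zero_lt_one hm)
  intro _ p hp _
  set f : Option V → ℝ := fun o => o.elim 0 (fun w => s * a w) with hf_def
  have hterm : ∀ v : V, (p (some v)).toReal * f (some v) = if v ∈ N then a v else 0 := by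
    intro v
    rw [hp v]
    split
    · rw [ENNReal.toReal_ofReal (by positivity)]
      show 1 / s * (s * a v) = a v
      field_simp
    · simp
  have hterm2 : ∀ v : V, (p (some v)).toReal * f (some v) ^ 2
      = if v ∈ N then s * (a v * a v) else 0 := by
    intro v
    rw [hp v]
    split
    · rw [ENNReal.toReal_ofReal (by positivity)]
      show 1 / s * (s * a v) ^ 2 = s * (a v * a v)
      field_simp
    · simp
  have hexp : pmfExp p f = ∑ w ∈ N, a w := by
    unfold pmfExp
    rw [Fintype.sum_option]
    simp only [hterm]
    rw [Finset.sum_ite_mem, Finset.univ_inter]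
    simp [hf_def]
  have hsq : pmfExp p (fun o => f o ^ 2) = s * ∑ w ∈ N, a w * a w := by
    unfold pmfExp
    rw [Fintype.sum_option]
    simp only [hterm2]
    rw [Finset.sum_ite_mem, Finset.univ_inter, ← Finset.mul_sum]
    simp [hf_def]
  refine ⟨hexp, ?_⟩
  rw [pmfVar_eq, hexp, hsq]
  have h1 : ∑ w ∈ N, a w * a w ≤ ∑ w ∈ N, a w := by
    refine Finset.sum_le_sum fun w hw => ?_
    obtain ⟨h0, h2⟩ := ha w hw
    nlinarith
  nlinarith [sq_nonneg (∑ w ∈ N, a w), hs.le, mul_le_mul_of_nonneg_left h1 hs.le]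

lemma stmt10_part2 {V : Type*} [Fintype V] [DecidableEq V] (G : SimpleGraph V)
    [DecidableRel G.Adj] (hm : 1 ≤ G.edgeFinset.card)
    (u : V) (hu : 1 ≤ G.degree u)
    (a : V → ℝ) (ha : ∀ w ∈ G.neighborFinset u, a w ∈ Set.Icc (0 : ℝ) (1 / 2)) :
    (Real.sqrt (G.edgeFinset.card) < (G.degree u : ℝ) →
      ∀ q : PMF (Fin ⌈(G.degree u : ℝ) / Real.sqrt (G.edgeFinset.card)⌉₊ → V),
        (∀ f, q f = if ∀ j, f j ∈ G.neighborFinset u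
          then ((G.degree u : ℝ≥0∞))⁻¹ ^ ⌈(G.degree u : ℝ) / Real.sqrt (G.edgeFinset.card)⌉₊
          else 0) →
        (pmfExp q (fun f => (1 / (⌈(G.degree u : ℝ) / Real.sqrt (G.edgeFinset.card)⌉₊ : ℝ))
              * ∑ j, (G.degree u : ℝ) * a (f j))
            = ∑ w ∈ G.neighborFinset u, a w ∧
          pmfVar q (fun f => (1 / (⌈(G.degree u : ℝ) / Real.sqrt (G.edgeFinset.card)⌉₊ : ℝ))
              * ∑ j, (G.degree u : ℝ) * a (f j))
            ≤ Real.sqrt (G.edgeFinset.card) *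
              pmfExp q (fun f =>
                (1 / (⌈(G.degree u : ℝ) / Real.sqrt (G.edgeFinset.card)⌉₊ : ℝ))
                  * ∑ j, (G.degree u : ℝ) * a (f j)))) := by
  set s := Real.sqrt (G.edgeFinset.card) with hs_def
  set N := G.neighborFinset u with hN_def
  have hs1 : 1 ≤ s := Real.one_le_sqrt.mpr (by exact_mod_cast hm)
  have hs : 0 < s := lt_of_lt_of_le one_pos hs1
  set d := G.degree u with hd_def
  have hd : 0 < (d : ℝ) := by exact_mod_cast hu
  have hNd : N.card = d := G.card_neighborFinset_eq_degree u
  set R := ⌈(d : ℝ) / s⌉₊ with hR_def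
  intro hsd q hq
  have hR2 : 2 ≤ R := by
    have : (1 : ℝ) < (d : ℝ) / s := (one_lt_div hs).mpr hsd
    exact Nat.lt_ceil.mpr (by exact_mod_cast this)
  have hR1 : 1 ≤ R := le_trans one_le_two hR2
  have hRpos : (0 : ℝ) < R := by exact_mod_cast lt_of_lt_of_le two_pos hR2
  have hdR : (d : ℝ) / R ≤ s := by
    rw [div_le_iff₀ hRpos]
    have h1 : (d : ℝ) / s ≤ R := Nat.le_ceil _
    calc (d : ℝ) = (d / s) * s := by field_simp
    _ ≤ R * s := by nlinarith
    _ = s * R := mul_comm _ _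
  set T := Fintype.piFinset (fun _ : Fin R => N) with hT_def
  set c : ℝ := ((d : ℝ)⁻¹) ^ R with hc_def
  have hq' : ∀ f, (q f).toReal = if f ∈ T then c else 0 := by
    intro f
    rw [hq f]
    by_cases hf : ∀ j, f j ∈ N
    · rw [if_pos hf, if_pos (Fintype.mem_piFinset.mpr hf), hc_def]
      rw [ENNReal.toReal_pow, ENNReal.toReal_inv]; norm_num
    · rw [if_neg hf, if_neg (fun h => hf (Fintype.mem_piFinset.mp h))]
      simp
  -- key power identities
  have hpow1 : c * (d : ℝ) ^ (R - 1) * d = 1 := by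
    have h1 : (d : ℝ) ^ (R - 1) * d = (d : ℝ) ^ R := by
      rw [← pow_succ, Nat.sub_add_cancel hR1]
    rw [hc_def, mul_assoc, h1, ← mul_pow, inv_mul_cancel₀ hd.ne', one_pow]
  have hpow2 : c * (d : ℝ) ^ (R - 2) * d ^ 2 = 1 := by
    have h1 : (d : ℝ) ^ (R - 2) * d ^ 2 = (d : ℝ) ^ R := by
      rw [← pow_add, Nat.sub_add_cancel hR2]
    rw [hc_def, mul_assoc, h1, ← mul_pow, inv_mul_cancel₀ hd.ne', one_pow]
  set Y : (Fin R → V) → ℝ := fun f => (1 / (R : ℝ)) * ∑ j, (d : ℝ) * a (f j) with hY_def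
  have hexp_gen : ∀ b : V → ℝ, (∑ f ∈ T, ∑ j : Fin R, b (f j))
      = (R : ℝ) * ((N.card : ℝ) ^ (R - 1) * ∑ w ∈ N, b w) := by
    intro b
    rw [Finset.sum_comm]
    rw [Finset.sum_congr rfl (fun j _ => sum_pi_one R N b j), Finset.sum_const,
      Finset.card_univ, Fintype.card_fin, nsmul_eq_mul]
  have hexp : pmfExp q Y = ∑ w ∈ N, a w := by
    unfold pmfExp
    rw [Finset.sum_congr rfl (fun f _ => show (q f).toReal * Y f
        = if f ∈ T then c * Y f else 0 by rw [hq' f]; split <;> simp)]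
    rw [Finset.sum_ite_mem, Finset.univ_inter]
    have : ∀ f, c * Y f = (c * (d : ℝ) / R) * ∑ j, a (f j) := by
      intro f
      rw [hY_def]
      simp only
      rw [← Finset.mul_sum]
      ring
    rw [Finset.sum_congr rfl (fun f _ => this f), ← Finset.mul_sum, hexp_gen a, hNd]
    have : c * (d : ℝ) / R * ((R : ℝ) * ((d : ℝ) ^ (R - 1) * ∑ w ∈ N, a w))
        = (c * (d : ℝ) ^ (R - 1) * d) * ((R : ℝ) / R) * ∑ w ∈ N, a w := by ring
    rw [this, hpow1, div_self hRpos.ne', one_mul, one_mul]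
  have hY2 : ∀ f : Fin R → V, Y f ^ 2
      = ((d : ℝ) / R) ^ 2 * ∑ j : Fin R, ∑ k : Fin R, a (f j) * a (f k) := by
    intro f
    have h1 : (∑ j : Fin R, a (f j)) * (∑ k : Fin R, a (f k))
        = ∑ j : Fin R, ∑ k : Fin R, a (f j) * a (f k) := Finset.sum_mul_sum _ _ _ _
    have h2 : Y f = ((d : ℝ) / R) * ∑ j : Fin R, a (f j) := by
      rw [hY_def]; simp only; rw [← Finset.mul_sum]; ring
    rw [h2, ← h1]; ring
  have hinner : ∀ j k : Fin R, (∑ f ∈ T, a (f j) * a (f k))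
      = if j = k then (d : ℝ) ^ (R - 1) * ∑ w ∈ N, a w * a w
        else (d : ℝ) ^ (R - 2) * ((∑ w ∈ N, a w) * ∑ w ∈ N, a w) := by
    intro j k
    by_cases h : j = k
    · subst h
      rw [if_pos rfl, hT_def, ← hNd]
      exact sum_pi_one R N (fun w => a w * a w) j
    · rw [if_neg h, hT_def, ← hNd]
      exact sum_pi_two R N a a j k h
  set Sa := ∑ w ∈ N, a w with hSa_def
  set Saa := ∑ w ∈ N, a w * a w with hSaa_def
  set A := (d : ℝ) ^ (R - 1) * Saa with hA_def
  set B := (d : ℝ) ^ (R - 2) * (Sa * Sa) with hB_def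
  have hrow : ∀ j : Fin R, (∑ k : Fin R, if j = k then A else B)
      = A + ((R : ℝ) - 1) * B := by
    intro j
    rw [Finset.sum_congr rfl (fun k _ =>
      show (if j = k then A else B) = B + (if j = k then A - B else 0) by split <;> ring)]
    rw [Finset.sum_add_distrib, Finset.sum_const, Finset.sum_ite_eq, if_pos (Finset.mem_univ j),
      Finset.card_univ, Fintype.card_fin, nsmul_eq_mul]
    ring
  have hsq : pmfExp q (fun f => Y f ^ 2) = ((d : ℝ) / R) * Saa + (((R : ℝ) - 1) / R) * (Sa * Sa) := by
    unfold pmfExp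
    rw [Finset.sum_congr rfl (fun f _ => show (q f).toReal * Y f ^ 2
        = if f ∈ T then c * Y f ^ 2 else 0 by rw [hq' f]; split <;> simp)]
    rw [Finset.sum_ite_mem, Finset.univ_inter]
    rw [Finset.sum_congr rfl (fun f _ => by rw [hY2 f, ← mul_assoc]), ← Finset.mul_sum]
    have hswap : (∑ f ∈ T, ∑ j : Fin R, ∑ k : Fin R, a (f j) * a (f k))
        = ∑ j : Fin R, ∑ k : Fin R, ∑ f ∈ T, a (f j) * a (f k) := by
      rw [Finset.sum_comm]
      exact Finset.sum_congr rfl (fun j _ => Finset.sum_comm)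
    rw [hswap, Finset.sum_congr rfl (fun j _ =>
      Finset.sum_congr rfl (fun k _ => hinner j k)),
      Finset.sum_congr rfl (fun j _ => hrow j), Finset.sum_const,
      Finset.card_univ, Fintype.card_fin, nsmul_eq_mul]
    have expand : c * ((d : ℝ) / R) ^ 2 * ((R : ℝ) * (A + ((R : ℝ) - 1) * B))
        = (c * (d : ℝ) ^ (R - 1) * d) * (((R : ℝ) / R) * ((d : ℝ) / R)) * Saa
          + (c * (d : ℝ) ^ (R - 2) * (d : ℝ) ^ 2) * ((((R : ℝ) - 1) / R) * ((R : ℝ) / R)) * (Sa * Sa) := by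
      rw [hA_def, hB_def]; ring
    rw [expand, hpow1, hpow2, div_self hRpos.ne']
    ring
  refine ⟨hexp, ?_⟩
  rw [pmfVar_eq, hexp, hsq]
  have hSaa0 : 0 ≤ Saa := Finset.sum_nonneg fun w hw => mul_self_nonneg (a w)
  have hSaa_le : Saa ≤ Sa := Finset.sum_le_sum fun w hw => by
    obtain ⟨h0, h2⟩ := ha w hw; nlinarith
  have hSa0 : 0 ≤ Sa := Finset.sum_nonneg fun w hw => (ha w hw).1
  have h2 : (((R : ℝ) - 1) / R) * (Sa * Sa) ≤ Sa * Sa := by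
    have hle : ((R : ℝ) - 1) / R ≤ 1 := by rw [div_le_one hRpos]; linarith
    nlinarith [mul_self_nonneg Sa]
  have h3 : ((d : ℝ) / R) * Saa ≤ s * Sa := by
    nlinarith [hdR, hs.le]
  have hSa2 : Sa ^ 2 = Sa * Sa := pow_two Sa
  linarith

/-- Let `G` have `m ≥ 1` edges, let `u` be a vertex with `d_u ≥ 1`, and let
`a : Γ(u) → [0, 1/2]`.  Define `Y` as follows.  If `d_u ≤ √m`: with probability `d_u/√m`
sample `w` uniformly from `Γ(u)` and set `Y = √m · a(w)`, otherwise `Y = 0` (so the law of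
the sample is the PMF `p` on `Option V` below).  If `d_u > √m`: let `R = ⌈d_u/√m⌉`, sample
`w_1, …, w_R` i.i.d. uniformly from `Γ(u)` (joint law `q` below) and set
`Y = (1/R)·Σ_j d_u · a(w_j)`.  In both cases `E[Y] = Σ_{w ∈ Γ(u)} a(w)` and
`Var(Y) ≤ √m · E[Y]`. -/
theorem stmt10 {V : Type*} [Fintype V] [DecidableEq V] (G : SimpleGraph V)
    [DecidableRel G.Adj] (hm : 1 ≤ G.edgeFinset.card)
    (u : V) (hu : 1 ≤ G.degree u)
    (a : V → ℝ) (ha : ∀ w ∈ G.neighborFinset u, a w ∈ Set.Icc (0 : ℝ) (1 / 2)) :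
    ((G.degree u : ℝ) ≤ Real.sqrt (G.edgeFinset.card) →
      ∀ p : PMF (Option V),
        (∀ w : V, p (some w) =
          if w ∈ G.neighborFinset u
          then ENNReal.ofReal (1 / Real.sqrt (G.edgeFinset.card)) else 0) →
        p none = ENNReal.ofReal
          (1 - (G.degree u : ℝ) / Real.sqrt (G.edgeFinset.card)) →
        (pmfExp p (fun o => o.elim 0 (fun w => Real.sqrt (G.edgeFinset.card) * a w))
            = ∑ w ∈ G.neighborFinset u, a w ∧
          pmfVar p (fun o => o.elim 0 (fun w => Real.sqrt (G.edgeFinset.card) * a w))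
            ≤ Real.sqrt (G.edgeFinset.card) *
              pmfExp p (fun o => o.elim 0 (fun w => Real.sqrt (G.edgeFinset.card) * a w)))) ∧
    (Real.sqrt (G.edgeFinset.card) < (G.degree u : ℝ) →
      ∀ q : PMF (Fin ⌈(G.degree u : ℝ) / Real.sqrt (G.edgeFinset.card)⌉₊ → V),
        (∀ f, q f = if ∀ j, f j ∈ G.neighborFinset u
          then ((G.degree u : ℝ≥0∞))⁻¹ ^ ⌈(G.degree u : ℝ) / Real.sqrt (G.edgeFinset.card)⌉₊
          else 0) →
        (pmfExp q (fun f => (1 / (⌈(G.degree u : ℝ) / Real.sqrt (G.edgeFinset.card)⌉₊ : ℝ))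
              * ∑ j, (G.degree u : ℝ) * a (f j))
            = ∑ w ∈ G.neighborFinset u, a w ∧
          pmfVar q (fun f => (1 / (⌈(G.degree u : ℝ) / Real.sqrt (G.edgeFinset.card)⌉₊ : ℝ))
              * ∑ j, (G.degree u : ℝ) * a (f j))
            ≤ Real.sqrt (G.edgeFinset.card) *
              pmfExp q (fun f =>
                (1 / (⌈(G.degree u : ℝ) / Real.sqrt (G.edgeFinset.card)⌉₊ : ℝ))
                  * ∑ j, (G.degree u : ℝ) * a (f j)))) := by
  exact ⟨stmt10_part1 G hm u hu a ha, stmt10_part2 G hm u hu a ha⟩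
end

section
/- Let ≺ be any linear (total) order on the vertex set of G with n ≥ 1 vertices. Define a random variable X as follows: pick a vertex v uniformly at random; if d_v = 0 set X = 0; otherwise pick u uniformly at random from Γ(v) and set X = 2·d_v if v ≺ u and X = 0 otherwise. Then E[X] = 2m/n, the average degree of G. -/
open Finset SimpleGraph
open scoped Classical ENNReal

lemma card_lt_pairs {V : Type*} [Fintype V] [DecidableEq V] [LinearOrder V]
    (G : SimpleGraph V) [DecidableRel G.Adj] :
    (Finset.univ.filter fun p : V × V => G.Adj p.1 p.2 ∧ p.1 < p.2).card
      = G.edgeFinset.card := by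
  set A := Finset.univ.filter fun p : V × V => G.Adj p.1 p.2 ∧ p.1 < p.2 with hA
  set B := Finset.univ.filter fun p : V × V => G.Adj p.1 p.2 ∧ p.2 < p.1 with hB
  have hcardAB : A.card = B.card := by
    apply Finset.card_bij (fun p _ => Prod.swap p)
    · intro p hp
      simp only [hA, Finset.mem_filter, Finset.mem_univ, true_and] at hp
      simp [hB, hp.1.symm, hp.2]
    · intro p hp q hq h
      exact Prod.swap_injective h
    · intro p hp
      simp only [hB, Finset.mem_filter, Finset.mem_univ, true_and] at hp
      exact ⟨Prod.swap p, by simp [hA, hp.1.symm, hp.2], by simp⟩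
  have hunion : (Finset.univ.filter fun p : V × V => G.Adj p.1 p.2) = A ∪ B := by
    ext p
    simp only [hA, hB, Finset.mem_filter, Finset.mem_union, Finset.mem_univ, true_and]
    constructor
    · intro h
      rcases lt_or_gt_of_ne (G.ne_of_adj h) with h2 | h2
      · exact Or.inl ⟨h, h2⟩
      · exact Or.inr ⟨h, h2⟩
    · rintro (⟨h, _⟩ | ⟨h, _⟩) <;> exact h
  have hdisj : Disjoint A B := by
    rw [Finset.disjoint_left]
    intro p hp hq
    simp only [hA, hB, Finset.mem_filter] at hp hq
    exact absurd (hp.2.2.trans hq.2.2) (lt_irrefl _)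
  have hall : (Finset.univ.filter fun p : V × V => G.Adj p.1 p.2).card
      = ∑ v, G.degree v := by
    rw [Finset.card_filter, Fintype.sum_prod_type]
    refine Finset.sum_congr rfl fun v _ => ?_
    rw [← Finset.card_filter]
    rw [SimpleGraph.degree, SimpleGraph.neighborFinset_eq_filter]
  have h2m : A.card + B.card = 2 * G.edgeFinset.card := by
    rw [← Finset.card_union_of_disjoint hdisj, ← hunion, hall,
      G.sum_degrees_eq_twice_card_edges]
  omega

set_option maxHeartbeats 1000000 in
/-- Let `≺` be any linear order on the vertex set of `G` (with `n ≥ 1`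
vertices).  Pick a vertex `v` uniformly at random; if `d_v = 0` set `X = 0`; otherwise
pick `u` uniformly from `Γ(v)` and set `X = 2d_v` if `v ≺ u` and `X = 0` otherwise.
(The joint law `p` of the sample on `V × Option V` is given by the mass function below,
where `none` records that no neighbor was drawn.)  Then `E[X] = 2m/n`. -/
theorem stmt13 {V : Type*} [Fintype V] [DecidableEq V] (G : SimpleGraph V)
    [DecidableRel G.Adj] (hn : 0 < Fintype.card V) (lo : LinearOrder V)
    (p : PMF (V × Option V))
    (hp1 : ∀ v u, p (v, some u) =
      if u ∈ G.neighborFinset v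
      then 1 / ((Fintype.card V : ℝ≥0∞) * (G.degree v : ℝ≥0∞)) else 0)
    (hp2 : ∀ v, p (v, none) =
      if G.degree v = 0 then 1 / (Fintype.card V : ℝ≥0∞) else 0) :
    pmfExp p (fun x =>
        match x with
        | (v, some u) => if lo.lt v u then 2 * (G.degree v : ℝ) else 0
        | (_, none) => 0)
      = 2 * (G.edgeFinset.card : ℝ) / (Fintype.card V : ℝ) := by
  letI := lo
  have hnR : (Fintype.card V : ℝ) ≠ 0 := Nat.cast_ne_zero.mpr hn.ne'
  have key : ∀ v u : V, (p (v, some u)).toReal *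
      (if lo.lt v u then 2 * (G.degree v : ℝ) else 0)
      = if G.Adj v u ∧ v < u then 2 / (Fintype.card V : ℝ) else 0 := by
    intro v u
    rw [hp1]
    by_cases hadj : u ∈ G.neighborFinset v
    · have hadj' : G.Adj v u := (G.mem_neighborFinset v u).mp hadj
      have hd : 0 < G.degree v := by
        rw [← G.card_neighborFinset_eq_degree]
        exact Finset.card_pos.mpr ⟨u, hadj⟩
      have hdR : (G.degree v : ℝ) ≠ 0 := Nat.cast_ne_zero.mpr hd.ne'
      have htop : ((Fintype.card V : ℝ≥0∞) * (G.degree v : ℝ≥0∞)) ≠ ⊤ := by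
        simp [ENNReal.mul_ne_top]
      rw [if_pos hadj, one_div, ENNReal.toReal_inv, ENNReal.toReal_mul,
        ENNReal.toReal_natCast, ENNReal.toReal_natCast]
      by_cases hlt : v < u
      · rw [if_pos hlt, if_pos ⟨hadj', hlt⟩]
        field_simp
      · simp [hlt]
    · have : ¬ G.Adj v u := fun h => hadj ((G.mem_neighborFinset v u).mpr h)
      simp [hadj, this]
  calc pmfExp p _ = ∑ v, ∑ u : V, (p (v, some u)).toReal *
        (if lo.lt v u then 2 * (G.degree v : ℝ) else 0) := by
        rw [pmfExp, Fintype.sum_prod_type]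
        refine Finset.sum_congr rfl fun v _ => ?_
        rw [Fintype.sum_option]
        simp
    _ = ∑ v, ∑ u : V, (if G.Adj v u ∧ v < u then 2 / (Fintype.card V : ℝ) else 0) := by
        refine Finset.sum_congr rfl fun v _ => Finset.sum_congr rfl fun u _ => key v u
    _ = ∑ q : V × V, (if G.Adj q.1 q.2 ∧ q.1 < q.2 then 2 / (Fintype.card V : ℝ) else 0) :=
        (Fintype.sum_prod_type (fun q : V × V =>
          if G.Adj q.1 q.2 ∧ q.1 < q.2 then 2 / (Fintype.card V : ℝ) else 0)).symm
    _ = (2 / (Fintype.card V : ℝ)) *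
        ((Finset.univ.filter fun q : V × V => G.Adj q.1 q.2 ∧ q.1 < q.2).card : ℝ) := by
        rw [Finset.card_filter]
        push_cast
        rw [Finset.mul_sum]
        refine Finset.sum_congr rfl fun q _ => ?_
        by_cases h : G.Adj q.1 q.2 ∧ q.1 < q.2 <;> simp [h]
    _ = 2 * (G.edgeFinset.card : ℝ) / (Fintype.card V : ℝ) := by
        rw [card_lt_pairs]
        ring
end
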